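/- arXiv:2008.09998 — 7 statements merged into one kernel-verified Lean document; each statement's English description precedes it below -/
import Mathlib

section
/- Let T be a tree with bipartition classes A and B such that |A| ≤ |B| and every vertex of A has degree at least 2. Then T has a matching saturating A, i.e., the matching number ν(T) equals |A|. -/
open SimpleGraph

/-- `M` is a matching in `G`: a set of edges of `G` that are pairwise vertex-disjoint. -/
def IsMatchingIn {V : Type*} (G : SimpleGraph V) (M : Finset (Sym2 V)) : Prop :=
  (∀ e ∈ M, e ∈ G.edgeSet) ∧
    (M : Set (Sym2 V)).Pairwise fun e f => ∀ v, ¬(v ∈ e ∧ v ∈ f)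

/-- Parity of walk length in a bipartite graph. -/
lemma walk_parity_aux {V : Type*} {T : SimpleGraph V} {A B : Finset V}
    (hdisj : Disjoint A B)
    (hbip : ∀ u v, T.Adj u v → (u ∈ A ∧ v ∈ B) ∨ (u ∈ B ∧ v ∈ A)) :
    ∀ {u v : V} (w : T.Walk u v), (Even w.length ↔ (u ∈ A ↔ v ∈ A)) := by
  intro u v w
  induction w with
  | nil => simp
  | @cons u x v h p ih =>
    have hux : u ∈ A ↔ ¬ x ∈ A := by
      rcases hbip _ _ h with ⟨hu, hx⟩ | ⟨hu, hx⟩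
      · exact ⟨fun _ => Finset.disjoint_right.mp hdisj hx, fun _ => hu⟩
      · constructor
        · intro hu'; exact absurd hu' (Finset.disjoint_right.mp hdisj hu)
        · intro hx'; exact absurd hx hx'
    simp only [SimpleGraph.Walk.length_cons, Nat.even_add_one, ih]
    tauto

/-- In a tree, a vertex has at most one neighbor strictly closer to a root. -/
lemma unique_parent_aux {V : Type*} {T : SimpleGraph V} (hT : T.IsTree) (r : V)
    {b a a' : V} (ha : T.Adj b a) (ha' : T.Adj b a')
    (hd : T.dist a r + 1 = T.dist b r) (hd' : T.dist a' r + 1 = T.dist b r) : a = a' := by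
  obtain ⟨p, hp⟩ := hT.isConnected.exists_walk_length_eq_dist a r
  obtain ⟨p', hp'⟩ := hT.isConnected.exists_walk_length_eq_dist a' r
  set w : T.Walk b r := SimpleGraph.Walk.cons ha p with hw
  set w' : T.Walk b r := SimpleGraph.Walk.cons ha' p' with hw'
  have hwl : w.length = T.dist b r := by
    simp [hw, SimpleGraph.Walk.length_cons, hp, ← hd]
  have hwl' : w'.length = T.dist b r := by
    simp [hw', SimpleGraph.Walk.length_cons, hp', ← hd']
  have hwp : w.IsPath := w.isPath_of_length_eq_dist hwl
  have hwp' : w'.IsPath := w'.isPath_of_length_eq_dist hwl'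
  obtain ⟨q, _, hq⟩ := hT.existsUnique_path b r
  have heq : w = w' := (hq w hwp).trans (hq w' hwp').symm
  have := congrArg (fun z : T.Walk b r => z.getVert 1) heq
  simpa [hw, hw', SimpleGraph.Walk.getVert] using this

theorem stmt1 {V : Type*} [Fintype V] [DecidableEq V]
    (T : SimpleGraph V) [DecidableRel T.Adj] (hT : T.IsTree)
    (A B : Finset V) (hdisj : Disjoint A B) (hcover : ∀ v, v ∈ A ∨ v ∈ B)
    (hbip : ∀ u v, T.Adj u v → (u ∈ A ∧ v ∈ B) ∨ (u ∈ B ∧ v ∈ A))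
    (hAB : A.card ≤ B.card) (hdeg : ∀ a ∈ A, 2 ≤ T.degree a) :
    (∃ M : Finset (Sym2 V), IsMatchingIn T M ∧ M.card = A.card) ∧
      (∀ M : Finset (Sym2 V), IsMatchingIn T M → M.card ≤ A.card) := by
  classical
  have helper : ∀ e ∈ T.edgeSet, ∃ a, a ∈ A ∧ a ∈ e := by
    intro e
    induction e using Sym2.ind with
    | _ u v =>
      intro he
      rw [SimpleGraph.mem_edgeSet] at he
      rcases hbip u v he with ⟨h1, _⟩ | ⟨_, h2⟩
      exacts [⟨u, h1, by simp⟩, ⟨v, h2, by simp⟩]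
  constructor
  · -- existence of a matching saturating A
    rcases A.eq_empty_or_nonempty with rfl | ⟨r, hr⟩
    · exact ⟨∅, ⟨by simp, by simp⟩, by simp⟩
    · -- parity of distances to the root r
      have parity : ∀ v : V, (Even (T.dist v r) ↔ (v ∈ A ↔ r ∈ A)) := by
        intro v
        obtain ⟨w, hw⟩ := hT.isConnected.exists_walk_length_eq_dist v r
        rw [← hw]
        exact walk_parity_aux hdisj hbip w
      -- distances of adjacent vertices differ by exactly one
      have adj_dist : ∀ a b : V, a ∈ A → T.Adj a b →
          T.dist b r = T.dist a r + 1 ∨ T.dist b r + 1 = T.dist a r := by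
        intro a b haA hab
        have hbB : b ∈ B := by
          rcases hbip a b hab with ⟨_, h⟩ | ⟨h, _⟩
          · exact h
          · exact absurd haA (Finset.disjoint_right.mp hdisj h)
        have hbA : b ∉ A := Finset.disjoint_right.mp hdisj hbB
        have h1 : T.dist b r ≤ T.dist a r + 1 := by
          obtain ⟨w, hw⟩ := hT.isConnected.exists_walk_length_eq_dist a r
          have := SimpleGraph.dist_le (SimpleGraph.Walk.cons hab.symm w)
          simpa [hw] using this
        have h2 : T.dist a r ≤ T.dist b r + 1 := by
          obtain ⟨w, hw⟩ := hT.isConnected.exists_walk_length_eq_dist b r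
          have := SimpleGraph.dist_le (SimpleGraph.Walk.cons hab w)
          simpa [hw] using this
        have hne : T.dist a r ≠ T.dist b r := by
          intro h
          have pa := parity a
          have pb := parity b
          rw [h] at pa
          have : (a ∈ A ↔ r ∈ A) ↔ (b ∈ A ↔ r ∈ A) := by rw [← pa, ← pb]
          tauto
        omega
      -- every vertex of A has a child
      have child : ∀ a, ∃ b, a ∈ A → T.Adj a b ∧ T.dist b r = T.dist a r + 1 := by
        intro a
        by_cases haA : a ∈ A
        · have hdeg2 : 1 < (T.neighborFinset a).card := by
            have := hdeg a haA
            rw [← SimpleGraph.card_neighborFinset_eq_degree] at this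
            omega
          obtain ⟨b₁, b₂, hb₁, hb₂, hne⟩ := Finset.one_lt_card_iff.mp hdeg2
          rw [SimpleGraph.mem_neighborFinset] at hb₁ hb₂
          rcases adj_dist a b₁ haA hb₁ with h₁ | h₁
          · exact ⟨b₁, fun _ => ⟨hb₁, h₁⟩⟩
          · rcases adj_dist a b₂ haA hb₂ with h₂ | h₂
            · exact ⟨b₂, fun _ => ⟨hb₂, h₂⟩⟩
            · exact absurd (unique_parent_aux hT r hb₁ hb₂ h₁ h₂) hne
        · exact ⟨a, fun h => absurd h haA⟩
      choose f hf using child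
      have hfB : ∀ a ∈ A, f a ∈ B := by
        intro a ha
        rcases hbip a (f a) (hf a ha).1 with ⟨_, h⟩ | ⟨h, _⟩
        · exact h
        · exact absurd ha (Finset.disjoint_right.mp hdisj h)
      have hfinj : ∀ a ∈ A, ∀ a' ∈ A, f a = f a' → a = a' := by
        intro a ha a' ha' h
        exact unique_parent_aux hT r ((hf a ha).1.symm)
          (h ▸ (hf a' ha').1.symm) (hf a ha).2.symm (h ▸ (hf a' ha').2.symm)
      refine ⟨A.image (fun a => s(a, f a)), ⟨?_, ?_⟩, ?_⟩
      · intro e he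
        obtain ⟨a, ha, rfl⟩ := Finset.mem_image.mp he
        exact (hf a ha).1
      · intro e he f' hf' hne v ⟨hv1, hv2⟩
        simp only [Finset.coe_image, Set.mem_image, Finset.mem_coe] at he hf'
        obtain ⟨a, ha, rfl⟩ := he
        obtain ⟨a', ha', rfl⟩ := hf'
        rw [Sym2.mem_iff] at hv1 hv2
        have hfa : f a ∉ A := Finset.disjoint_right.mp hdisj (hfB a ha)
        have hfa' : f a' ∉ A := Finset.disjoint_right.mp hdisj (hfB a' ha')
        rcases hv1 with rfl | rfl <;> rcases hv2 with h | h
        · exact hne (by rw [h])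
        · exact hfa' (h ▸ ha)
        · exact hfa (h ▸ ha')
        · exact hne (by rw [hfinj a ha a' ha' h])
      · rw [Finset.card_image_of_injOn]
        intro a ha a' ha' h
        simp only [Sym2.eq, Sym2.rel_iff', Prod.mk.injEq, Prod.swap_prod_mk] at h
        rcases h with ⟨rfl, _⟩ | ⟨h1, h2⟩
        · rfl
        · exact absurd (h1 ▸ (hfB a' ha')) (Finset.disjoint_right.mp hdisj · ha)
  · -- upper bound
    intro M hM
    have hex : ∀ e ∈ M, ∃ a, a ∈ A ∧ a ∈ e := fun e he => helper e (hM.1 e he)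
    apply Finset.card_le_card_of_injOn
      (fun e => if h : ∃ a, a ∈ A ∧ a ∈ e then h.choose else e.out.1)
    · intro e he
      have h := hex e he
      simp only [dif_pos h]
      exact h.choose_spec.1
    · intro e he e' he' hfe
      rw [Finset.mem_coe] at he he'
      have h := hex e he
      have h' := hex e' he'
      simp only [dif_pos h, dif_pos h'] at hfe
      by_contra hne
      exact hM.2 he he' hne h.choose (by
        refine ⟨h.choose_spec.2, ?_⟩
        rw [hfe]
        exact h'.choose_spec.2)
end

section
/- Let T be a tree with bipartition classes A and B such that |A| ≤ |B| and every vertex of A has degree at least 2. Then the minimum vertex cover number β(T) equals |A|. -/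
/-- `C` is a vertex cover of `G`: every edge of `G` has an endpoint in `C`. -/
def IsVertexCover {V : Type*} (G : SimpleGraph V) (C : Finset V) : Prop :=
  ∀ e ∈ G.edgeSet, ∃ v ∈ C, v ∈ e

open SimpleGraph Walk in
/-- Rooting a tree at `r`, any vertex `a ≠ r` of degree at least 2 has a "child" `b`:
a neighbor such that every path from `b` to `r` has second vertex `a`. -/
lemma exists_child {V : Type*} [Fintype V] [DecidableEq V]
    (T : SimpleGraph V) [DecidableRel T.Adj] (hT : T.IsTree) (r a : V) (har : a ≠ r)
    (hdeg : 2 ≤ T.degree a) :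
    ∃ b, T.Adj a b ∧ ∀ p : T.Walk b r, p.IsPath → p.getVert 1 = a := by
  obtain ⟨P, hP, -⟩ := hT.existsUnique_path a r
  cases P with
  | nil => exact absurd rfl har
  | @cons _ p0 _ h q =>
    have hcard : 1 < (T.neighborFinset a).card := hdeg
    obtain ⟨b, hbmem, hbp0⟩ := Finset.exists_mem_ne hcard p0
    have hab : T.Adj a b := (T.mem_neighborFinset a b).1 hbmem
    have hbsupp : b ∉ (Walk.cons h q).support := by
      intro hbs
      have hQ : ((Walk.cons h q).takeUntil b hbs).IsPath := hP.takeUntil hbs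
      have heq : (Walk.cons h q).takeUntil b hbs = (SimpleGraph.Path.singleton hab : T.Path a b) :=
        (hT.existsUnique_path a b).unique hQ (SimpleGraph.Path.singleton hab).prop
      have hedge : s(a, b) ∈ (Walk.cons h q).edges := by
        apply edges_takeUntil_subset _ hbs
        rw [heq]
        simp [SimpleGraph.Path.singleton]
      rw [edges_cons, List.mem_cons] at hedge
      rcases hedge with h1 | h2
      · exact hbp0 (Sym2.congr_right.1 h1)
      · have : a ∈ q.support := q.fst_mem_support_of_mem_edges h2
        exact ((Walk.cons_isPath_iff h q).1 hP).2 this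
    refine ⟨b, hab, fun p hp => ?_⟩
    have hW : (Walk.cons hab.symm (Walk.cons h q)).IsPath := hP.cons hbsupp
    have := (hT.existsUnique_path b r).unique hp hW
    rw [this, Walk.getVert_cons_succ, Walk.getVert_zero]

theorem stmt2 {V : Type*} [Fintype V] [DecidableEq V]
    (T : SimpleGraph V) [DecidableRel T.Adj] (hT : T.IsTree)
    (A B : Finset V) (hdisj : Disjoint A B) (hcover : ∀ v, v ∈ A ∨ v ∈ B)
    (hbip : ∀ u v, T.Adj u v → (u ∈ A ∧ v ∈ B) ∨ (u ∈ B ∧ v ∈ A))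
    (hAB : A.card ≤ B.card) (hdeg : ∀ a ∈ A, 2 ≤ T.degree a) :
    (∃ C : Finset V, IsVertexCover T C ∧ C.card = A.card) ∧
      (∀ C : Finset V, IsVertexCover T C → A.card ≤ C.card) := by
  constructor
  · refine ⟨A, ?_, rfl⟩
    intro e he
    induction e with
    | _ u v =>
      rw [SimpleGraph.mem_edgeSet] at he
      rcases hbip u v he with ⟨hu, -⟩ | ⟨-, hv⟩
      · exact ⟨u, hu, Sym2.mem_mk_left u v⟩
      · exact ⟨v, hv, Sym2.mem_mk_right u v⟩
  · intro C hC
    rcases A.eq_empty_or_nonempty with hA | hA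
    · simp [hA]
    · have hBne : B.Nonempty := Finset.card_pos.1 (lt_of_lt_of_le (Finset.card_pos.2 hA) hAB)
      obtain ⟨r, hr⟩ := hBne
      have hchild : ∀ a ∈ A, ∃ b, T.Adj a b ∧
          ∀ p : T.Walk b r, p.IsPath → p.getVert 1 = a := by
        intro a ha
        have har : a ≠ r := fun h => Finset.disjoint_left.1 hdisj ha (h ▸ hr)
        exact exists_child T hT r a har (hdeg a ha)
      choose! b hb1 hb2 using hchild
      have hBb : ∀ a ∈ A, b a ∈ B := by
        intro a ha
        rcases hbip a (b a) (hb1 a ha) with ⟨-, h⟩ | ⟨h, -⟩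
        · exact h
        · exact absurd ha (Finset.disjoint_right.1 hdisj h)
      have hcov : ∀ a ∈ A, ∃ c ∈ C, c = a ∨ c = b a := by
        intro a ha
        obtain ⟨c, hcC, hce⟩ := hC s(a, b a) ((SimpleGraph.mem_edgeSet T).2 (hb1 a ha))
        exact ⟨c, hcC, Sym2.mem_iff.1 hce⟩
      choose! c hc1 hc2 using hcov
      apply Finset.card_le_card_of_injOn c hc1
      intro a ha a' ha' hcc
      have hbinj : b a = b a' → a = a' := by
        intro e
        obtain ⟨p, hp, -⟩ := hT.existsUnique_path (b a) r
        have h1 := hb2 a ha p hp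
        have h2 := hb2 a' ha' (p.copy e rfl) ((SimpleGraph.Walk.isPath_copy p e rfl).2 hp)
        rw [SimpleGraph.Walk.getVert_copy] at h2
        rw [← h1, ← h2]
      rcases hc2 a ha with h1 | h1 <;> rcases hc2 a' ha' with h2 | h2
      · rw [← h1, ← h2, hcc]
      · have : b a' ∈ A := by rw [← h2, ← hcc, h1]; exact ha
        exact absurd this (Finset.disjoint_right.1 hdisj (hBb a' ha'))
      · have : b a ∈ A := by rw [← h1, hcc, h2]; exact ha'
        exact absurd this (Finset.disjoint_right.1 hdisj (hBb a ha))
      · exact hbinj (by rw [← h1, ← h2, hcc])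
end

section
/- Let k ≥ 1 and let G be a graph that contains no K_{1,k}, no matching of size k, and no two vertex-disjoint copies of K_{1,k-1}. Then e(G) ≤ k² − (3/2)k + 1/2 if k is odd, and e(G) ≤ k² − (3/2)k if k is even. -/
set_option linter.unusedVariables false
set_option linter.unusedSectionVars false

namespace StarFree

open Finset SimpleGraph

variable {V : Type*} [Fintype V] [DecidableEq V]

/-- delete a vertex -/
def delV (H : SimpleGraph V) (v : V) : SimpleGraph V where
  Adj a b := H.Adj a b ∧ a ≠ v ∧ b ≠ v
  symm := ⟨fun a b ⟨h, ha, hb⟩ => ⟨h.symm, hb, ha⟩⟩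
  loopless := ⟨fun a ⟨h, _, _⟩ => H.loopless.irrefl a h⟩

/-- restrict to a vertex set -/
def restr (H : SimpleGraph V) (A : Finset V) : SimpleGraph V where
  Adj a b := H.Adj a b ∧ a ∈ A ∧ b ∈ A
  symm := ⟨fun a b ⟨h, ha, hb⟩ => ⟨h.symm, hb, ha⟩⟩
  loopless := ⟨fun a ⟨h, _, _⟩ => H.loopless.irrefl a h⟩

open Classical in
noncomputable def ec (H : SimpleGraph V) : ℕ := H.edgeFinset.card

open Classical in
noncomputable def degc (H : SimpleGraph V) (v : V) : ℕ := H.degree v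

open Classical in
noncomputable def suppF (H : SimpleGraph V) : Finset V :=
  Finset.univ.filter (fun v => degc H v ≠ 0)

open Classical in
noncomputable def allM (H : SimpleGraph V) : Finset (Finset (Sym2 V)) :=
  H.edgeFinset.powerset.filter (fun M => IsMatchingIn H M)

open Classical in
noncomputable def nu (H : SimpleGraph V) : ℕ := (allM H).sup Finset.card

open Classical in
noncomputable def covF (M : Finset (Sym2 V)) : Finset V :=
  Finset.univ.filter (fun x => ∃ e ∈ M, x ∈ e)

section basic

variable {H : SimpleGraph V} {M : Finset (Sym2 V)}

lemma matching_edge (hM : IsMatchingIn H M) {e} (he : e ∈ M) : e ∈ H.edgeSet := hM.1 e he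

lemma matching_unique (hM : IsMatchingIn H M) {e f : Sym2 V} (he : e ∈ M) (hf : f ∈ M)
    {x : V} (hxe : x ∈ e) (hxf : x ∈ f) : e = f := by
  by_contra hne
  exact hM.2 (by exact_mod_cast he) (by exact_mod_cast hf) hne x ⟨hxe, hxf⟩

lemma matching_subset (hM : IsMatchingIn H M) {M' : Finset (Sym2 V)} (h : M' ⊆ M) :
    IsMatchingIn H M' :=
  ⟨fun e he => hM.1 e (h he), hM.2.mono (by exact_mod_cast h)⟩

lemma matching_mono {H' : SimpleGraph V} (hle : H ≤ H') (hM : IsMatchingIn H M) :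
    IsMatchingIn H' M :=
  ⟨fun e he => SimpleGraph.edgeSet_mono hle (hM.1 e he), hM.2⟩

lemma matching_empty : IsMatchingIn H (∅ : Finset (Sym2 V)) := by
  constructor
  · simp
  · simp [Set.Pairwise]

lemma matching_insert (hM : IsMatchingIn H M) {a b : V} (hab : s(a,b) ∈ H.edgeSet)
    (ha : ∀ e ∈ M, a ∉ e) (hb : ∀ e ∈ M, b ∉ e) :
    IsMatchingIn H (insert s(a,b) M) := by
  constructor
  · intro e he
    rcases Finset.mem_insert.1 he with rfl | he
    · exact hab
    · exact hM.1 e he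
  · intro e he f hf hne v hv
    simp only [Finset.coe_insert, Set.mem_insert_iff, Finset.mem_coe] at he hf
    rcases he with rfl | he
    · rcases hf with rfl | hf
      · exact hne rfl
      · rcases Sym2.mem_iff.1 hv.1 with rfl | rfl
        · exact ha f hf hv.2
        · exact hb f hf hv.2
    · rcases hf with rfl | hf
      · rcases Sym2.mem_iff.1 hv.2 with rfl | rfl
        · exact ha e he hv.1
        · exact hb e he hv.1
      · exact hM.2 (by exact_mod_cast he) (by exact_mod_cast hf) hne v hv

lemma exists_partner (hM : IsMatchingIn H M) {e : Sym2 V} (he : e ∈ M) {z : V} (hz : z ∈ e) :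
    ∃ c, c ≠ z ∧ s(z,c) = e ∧ H.Adj z c := by
  refine ⟨Sym2.Mem.other' hz, ?_, Sym2.other_spec' hz, ?_⟩
  · intro h
    have hedge := hM.1 e he
    have : ¬ e.IsDiag := SimpleGraph.not_isDiag_of_mem_edgeSet H hedge
    rw [← Sym2.other_spec' hz] at this
    exact this (by rw [Sym2.mk_isDiag_iff]; exact h.symm)
  · have hedge := hM.1 e he
    rw [← Sym2.other_spec' hz] at hedge
    exact (SimpleGraph.mem_edgeSet H).1 hedge

lemma mem_allM {H : SimpleGraph V} : M ∈ allM H ↔ IsMatchingIn H M := by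
  classical
  constructor
  · intro h
    exact (Finset.mem_filter.1 h).2
  · intro h
    refine Finset.mem_filter.2 ⟨Finset.mem_powerset.2 ?_, h⟩
    intro e he
    simpa [SimpleGraph.mem_edgeFinset] using h.1 e he

lemma card_le_nu (hM : IsMatchingIn H M) : M.card ≤ nu H :=
  Finset.le_sup (mem_allM.2 hM)

lemma exists_max_matching (H : SimpleGraph V) :
    ∃ M, IsMatchingIn H M ∧ M.card = nu H := by
  classical
  have hne : (allM H).Nonempty := ⟨∅, mem_allM.2 matching_empty⟩
  obtain ⟨M, hM, hcard⟩ := Finset.exists_mem_eq_sup (allM H) hne Finset.card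
  exact ⟨M, mem_allM.1 hM, hcard.symm⟩

lemma mem_covF {x : V} : x ∈ covF M ↔ ∃ e ∈ M, x ∈ e := by
  classical
  simp [covF]

lemma covF_card_le : (covF M).card ≤ 2 * M.card := by
  classical
  induction M using Finset.induction_on with
  | empty => simp [covF]
  | @insert e M he ih =>
    revert he
    induction e using Sym2.inductionOn with
    | hf a b =>
      intro he
      have hsub : covF (insert s(a,b) M) ⊆ insert a (insert b (covF M)) := by
        intro x hx
        rw [mem_covF] at hx
        obtain ⟨f, hf, hxf⟩ := hx
        rcases Finset.mem_insert.1 hf with rfl | hf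
        · rcases Sym2.mem_iff.1 hxf with rfl | rfl
          · exact Finset.mem_insert_self _ _
          · exact Finset.mem_insert.2 (Or.inr (Finset.mem_insert_self _ _))
        · exact Finset.mem_insert.2 (Or.inr (Finset.mem_insert.2 (Or.inr (mem_covF.2 ⟨f, hf, hxf⟩))))
      have h1 : (covF (insert s(a,b) M)).card ≤ (insert a (insert b (covF M))).card :=
        Finset.card_le_card hsub
      have h2 := Finset.card_insert_le a (insert b (covF M))
      have h3 := Finset.card_insert_le b (covF M)
      have h4 : (insert s(a,b) M).card = M.card + 1 := Finset.card_insert_of_notMem he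
      omega

lemma ec_eq (H : SimpleGraph V) [Fintype H.edgeSet] : ec H = H.edgeFinset.card := by
  unfold ec
  congr 1
  ext e
  simp [SimpleGraph.mem_edgeFinset]

lemma degc_eq (H : SimpleGraph V) (v : V) [Fintype (H.neighborSet v)] :
    degc H v = H.degree v := by
  unfold degc
  rw [← SimpleGraph.card_neighborFinset_eq_degree, ← SimpleGraph.card_neighborFinset_eq_degree]
  congr 1
  ext w
  simp [SimpleGraph.mem_neighborFinset]

lemma adj_of_degc_ne_zero {v : V} (h : degc H v ≠ 0) : ∃ w, H.Adj v w := by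
  classical
  rw [degc_eq] at h
  have : (H.neighborFinset v).Nonempty := Finset.card_ne_zero.1 h
  obtain ⟨w, hw⟩ := this
  exact ⟨w, (H.mem_neighborFinset v w).1 hw⟩

lemma degc_ne_zero_of_adj {v w : V} (h : H.Adj v w) : degc H v ≠ 0 := by
  classical
  rw [degc_eq]
  have : w ∈ H.neighborFinset v := (H.mem_neighborFinset v w).2 h
  have h2 := Finset.card_ne_zero_of_mem this
  rw [← SimpleGraph.card_neighborFinset_eq_degree]
  exact h2

lemma degc_mono {H H' : SimpleGraph V} (hle : H ≤ H') (v : V) : degc H v ≤ degc H' v := by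
  classical
  rw [degc_eq, degc_eq]
  apply Finset.card_le_card
  intro w hw
  rw [SimpleGraph.mem_neighborFinset] at hw ⊢
  exact hle hw

lemma mem_suppF {v : V} : v ∈ suppF H ↔ degc H v ≠ 0 := by
  classical
  simp [suppF]

lemma delV_le {v : V} : delV H v ≤ H := fun _ _ h => h.1

lemma restr_le {A : Finset V} : restr H A ≤ H := fun _ _ h => h.1

lemma edge_delV_not_mem {v : V} {e : Sym2 V} (he : e ∈ (delV H v).edgeSet) : v ∉ e := by
  induction e using Sym2.inductionOn with
  | hf a b =>
    rw [SimpleGraph.mem_edgeSet] at he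
    obtain ⟨_, ha, hb⟩ := he
    rw [Sym2.mem_iff]
    rintro (rfl | rfl)
    · exact ha rfl
    · exact hb rfl

lemma edge_mem_delV {v : V} {e : Sym2 V} (he : e ∈ H.edgeSet) (hv : v ∉ e) :
    e ∈ (delV H v).edgeSet := by
  induction e using Sym2.inductionOn with
  | hf a b =>
    rw [SimpleGraph.mem_edgeSet] at he ⊢
    rw [Sym2.mem_iff] at hv
    push_neg at hv
    exact ⟨he, fun h => hv.1 h.symm, fun h => hv.2 h.symm⟩

lemma edge_restr_subset {A : Finset V} {e : Sym2 V} (he : e ∈ (restr H A).edgeSet) :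
    ∀ x ∈ e, x ∈ A := by
  induction e using Sym2.inductionOn with
  | hf a b =>
    rw [SimpleGraph.mem_edgeSet] at he
    intro x hx
    rcases Sym2.mem_iff.1 hx with rfl | rfl
    · exact he.2.1
    · exact he.2.2

lemma ec_delV (H : SimpleGraph V) (v : V) : ec (delV H v) + degc H v = ec H := by
  classical
  rw [ec_eq, ec_eq, degc_eq]
  have h1 : (delV H v).edgeFinset = H.edgeFinset.filter (fun e => v ∉ e) := by
    ext e
    simp only [SimpleGraph.mem_edgeFinset, Finset.mem_filter]
    constructor
    · intro he
      exact ⟨SimpleGraph.edgeSet_mono delV_le he, edge_delV_not_mem he⟩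
    · intro ⟨he, hv⟩
      exact edge_mem_delV he hv
  have h2 : H.edgeFinset.filter (fun e => v ∈ e) = H.incidenceFinset v := by
    ext e
    simp [SimpleGraph.mem_incidenceFinset, SimpleGraph.incidenceSet,
      SimpleGraph.mem_edgeFinset, and_comm]
  rw [h1, ← SimpleGraph.card_incidenceFinset_eq_degree, ← h2]
  rw [add_comm]
  exact Finset.card_filter_add_card_filter_not _

lemma handshake (H : SimpleGraph V) : ∑ v ∈ suppF H, degc H v = 2 * ec H := by
  classical
  have h0 : ∑ v ∈ suppF H, degc H v = ∑ v, degc H v := by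
    apply Finset.sum_subset (Finset.subset_univ _)
    intro x _ hx
    rw [mem_suppF] at hx
    push_neg at hx
    exact hx
  rw [h0, ec_eq]
  have : ∀ v, degc H v = H.degree v := fun v => degc_eq H v
  rw [Finset.sum_congr rfl (fun v _ => this v)]
  exact SimpleGraph.sum_degrees_eq_twice_card_edges H

lemma nu_delV_le (H : SimpleGraph V) (v : V) : nu (delV H v) ≤ nu H := by
  classical
  apply Finset.sup_le
  intro M hM
  exact card_le_nu (matching_mono delV_le (mem_allM.1 hM))

lemma nu_le_nu_delV_succ (H : SimpleGraph V) (v : V) : nu H ≤ nu (delV H v) + 1 := by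
  classical
  obtain ⟨M, hM, hcard⟩ := exists_max_matching H
  set M' := M.filter (fun e => v ∉ e) with hM'def
  have hmm : IsMatchingIn (delV H v) M' := by
    constructor
    · intro e he
      rw [Finset.mem_filter] at he
      exact edge_mem_delV (hM.1 e he.1) he.2
    · exact hM.2.mono (by exact_mod_cast Finset.filter_subset _ _)
  have hfil : (M.filter (fun e => v ∈ e)).card ≤ 1 := by
    rw [Finset.card_le_one]
    intro e he f hf
    rw [Finset.mem_filter] at he hf
    exact matching_unique hM he.1 hf.1 he.2 hf.2
  have hsplit := Finset.card_filter_add_card_filter_not (s := M) (p := fun e => v ∈ e)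
  have h1 : M'.card ≤ nu (delV H v) := card_le_nu hmm
  have hcc : (M.filter (fun e => ¬ v ∈ e)).card = M'.card := rfl
  omega

lemma nu_delV_eq_of_deg_zero {v : V} (h : degc H v = 0) : nu (delV H v) = nu H := by
  classical
  refine le_antisymm (nu_delV_le H v) ?_
  obtain ⟨M, hM, hcard⟩ := exists_max_matching H
  rw [← hcard]
  apply card_le_nu (M := M)
  constructor
  · intro e he
    refine edge_mem_delV (hM.1 e he) ?_
    intro hv
    obtain ⟨c, _, hzc, hadj⟩ := exists_partner hM he hv
    exact degc_ne_zero_of_adj hadj h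
  · exact hM.2

lemma nu_split_le (H : SimpleGraph V) (A : Finset V) :
    nu (restr H A) + nu (restr H Aᶜ) ≤ nu H := by
  classical
  obtain ⟨M₁, hM₁, hc₁⟩ := exists_max_matching (restr H A)
  obtain ⟨M₂, hM₂, hc₂⟩ := exists_max_matching (restr H Aᶜ)
  have hdisj : ∀ e₁ ∈ M₁, ∀ e₂ ∈ M₂, ∀ x : V, ¬(x ∈ e₁ ∧ x ∈ e₂) := by
    intro e₁ he₁ e₂ he₂ x ⟨hx₁, hx₂⟩
    have h1 := edge_restr_subset (hM₁.1 e₁ he₁) x hx₁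
    have h2 := edge_restr_subset (hM₂.1 e₂ he₂) x hx₂
    rw [Finset.mem_compl] at h2
    exact h2 h1
  have hdisjF : Disjoint M₁ M₂ := by
    rw [Finset.disjoint_left]
    intro e he₁ he₂
    induction e using Sym2.inductionOn with
    | hf a b => exact hdisj _ he₁ _ he₂ a ⟨Sym2.mem_mk_left a b, Sym2.mem_mk_left a b⟩
  have hun : IsMatchingIn H (M₁ ∪ M₂) := by
    constructor
    · intro e he
      rcases Finset.mem_union.1 he with he | he
      · exact SimpleGraph.edgeSet_mono restr_le (hM₁.1 e he)
      · exact SimpleGraph.edgeSet_mono restr_le (hM₂.1 e he)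
    · intro e he f hf hne x hx
      rw [Finset.coe_union, Set.mem_union] at he hf
      rcases he with he | he <;> rcases hf with hf | hf
      · exact hM₁.2 (by exact_mod_cast he) (by exact_mod_cast hf) hne x hx
      · exact hdisj e (by exact_mod_cast he) f (by exact_mod_cast hf) x hx
      · exact hdisj f (by exact_mod_cast hf) e (by exact_mod_cast he) x ⟨hx.2, hx.1⟩
      · exact hM₂.2 (by exact_mod_cast he) (by exact_mod_cast hf) hne x hx
  have := card_le_nu hun
  rw [Finset.card_union_of_disjoint hdisjF] at this
  omega

lemma ec_split {A : Finset V} (hA : ∀ a b, H.Adj a b → (a ∈ A ↔ b ∈ A)) :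
    ec (restr H A) + ec (restr H Aᶜ) = ec H := by
  classical
  rw [ec_eq, ec_eq, ec_eq]
  have h1 : (restr H A).edgeFinset = H.edgeFinset.filter (fun e => ∀ x ∈ e, x ∈ A) := by
    ext e
    induction e using Sym2.inductionOn with
    | hf a b =>
      simp only [SimpleGraph.mem_edgeFinset, SimpleGraph.mem_edgeSet, Finset.mem_filter]
      constructor
      · intro ⟨h, ha, hb⟩
        refine ⟨h, ?_⟩
        intro x hx
        rcases Sym2.mem_iff.1 hx with rfl | rfl
        · exact ha
        · exact hb
      · intro ⟨h, hall⟩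
        exact ⟨h, hall a (Sym2.mem_mk_left a b), hall b (Sym2.mem_mk_right a b)⟩
  have h2 : (restr H Aᶜ).edgeFinset = H.edgeFinset.filter (fun e => ¬ ∀ x ∈ e, x ∈ A) := by
    ext e
    induction e using Sym2.inductionOn with
    | hf a b =>
      simp only [SimpleGraph.mem_edgeFinset, SimpleGraph.mem_edgeSet, Finset.mem_filter]
      constructor
      · intro ⟨h, ha, hb⟩
        rw [Finset.mem_compl] at ha hb
        refine ⟨h, ?_⟩
        intro hall
        exact ha (hall a (Sym2.mem_mk_left a b))
      · intro ⟨h, hnall⟩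
        have hiff := hA a b h
        refine ⟨h, Finset.mem_compl.2 ?_, Finset.mem_compl.2 ?_⟩
        · intro ha
          apply hnall
          intro x hx
          rcases Sym2.mem_iff.1 hx with rfl | rfl
          · exact ha
          · exact hiff.1 ha
        · intro hb
          apply hnall
          intro x hx
          rcases Sym2.mem_iff.1 hx with rfl | rfl
          · exact hiff.2 hb
          · exact hb
  rw [h1, h2]
  exact Finset.card_filter_add_card_filter_not _

lemma degc_restr_eq {A : Finset V} (hA : ∀ a b, H.Adj a b → (a ∈ A ↔ b ∈ A))
    {u : V} (hu : u ∈ A) : degc (restr H A) u = degc H u := by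
  classical
  rw [degc_eq, degc_eq, ← SimpleGraph.card_neighborFinset_eq_degree,
    ← SimpleGraph.card_neighborFinset_eq_degree]
  congr 1
  ext w
  simp only [SimpleGraph.mem_neighborFinset]
  constructor
  · intro h
    exact h.1
  · intro h
    exact ⟨h, hu, (hA u w h).1 hu⟩

/-- The key exchange lemma: given matchings `M`, `N` and a vertex `z` covered by `M`
but not by `N`, either there is a matching larger than `N`, or there is a matching `K`
of the same size as `M` whose covered set is that of `M` with `z` traded for one new
vertex `y` not covered by `M`. -/
lemma Wlem (H : SimpleGraph V) :
    ∀ (n : ℕ) (M N : Finset (Sym2 V)), (M \ N).card ≤ n →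
    IsMatchingIn H M → IsMatchingIn H N →
    ∀ z : V, (∃ e ∈ M, z ∈ e) → (∀ e ∈ N, z ∉ e) →
    (∃ P, IsMatchingIn H P ∧ P.card = N.card + 1) ∨
    (∃ K y, IsMatchingIn H K ∧ K ⊆ M ∪ N ∧ K.card = M.card ∧ (∀ e ∈ M, y ∉ e) ∧ y ≠ z ∧
      (∀ x : V, (∃ e ∈ K, x ∈ e) ↔ ((∃ e ∈ M, x ∈ e) ∧ x ≠ z) ∨ x = y)) := by
  intro n
  induction n with
  | zero =>
    intro M N hn hM hN z hzM hzN
    obtain ⟨e₀, he₀M, hze₀⟩ := hzM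
    have hmem : e₀ ∈ M \ N := Finset.mem_sdiff.2 ⟨he₀M, fun h => hzN e₀ h hze₀⟩
    have := Finset.card_ne_zero_of_mem hmem
    omega
  | succ n ih =>
    intro M N hn hM hN z hzM hzN
    obtain ⟨e₀, he₀M, hze₀⟩ := hzM
    obtain ⟨c₁, hc₁z, he₀eq, hadj₁⟩ := exists_partner hM he₀M hze₀
    have hc₁e₀ : c₁ ∈ e₀ := he₀eq ▸ Sym2.mem_mk_right z c₁
    have he₀N : e₀ ∉ N := fun h => hzN e₀ h hze₀
    have hzuniqM : ∀ e ∈ M, z ∈ e → e = e₀ := fun e he hz => matching_unique hM he he₀M hz hze₀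
    have hc₁uniqM : ∀ e ∈ M, c₁ ∈ e → e = e₀ := fun e he hc => matching_unique hM he he₀M hc hc₁e₀
    by_cases hc₁N : ∀ e ∈ N, c₁ ∉ e
    · -- Case A : c₁ is N-exposed, so N + e₀ is a bigger matching
      left
      refine ⟨insert e₀ N, ?_, Finset.card_insert_of_notMem he₀N⟩
      rw [← he₀eq]
      exact matching_insert hN (he₀eq ▸ hM.1 e₀ he₀M) hzN hc₁N
    · push_neg at hc₁N
      obtain ⟨f, hfN, hc₁f⟩ := hc₁N
      obtain ⟨c₂, hc₂c₁, hfeq, hadj₂⟩ := exists_partner hN hfN hc₁f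
      have hc₂f : c₂ ∈ f := hfeq ▸ Sym2.mem_mk_right c₁ c₂
      have hc₂z : c₂ ≠ z := fun h => hzN f hfN (h ▸ hc₂f)
      have hfM : f ∉ M := by
        intro h
        have : f = e₀ := hc₁uniqM f h hc₁f
        exact he₀N (this ▸ hfN)
      have hc₁uniqN : ∀ e ∈ N, c₁ ∈ e → e = f := fun e he hc => matching_unique hN he hfN hc hc₁f
      have hc₂uniqN : ∀ e ∈ N, c₂ ∈ e → e = f := fun e he hc => matching_unique hN he hfN hc hc₂f
      by_cases hc₂M : ∀ e ∈ M, c₂ ∉ e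
      · -- Case B : c₂ is M-exposed; swap e₀ out for f
        right
        refine ⟨insert f (M.erase e₀), c₂, ?_, ?_, ?_, hc₂M, hc₂z, ?_⟩
        · rw [← hfeq]
          refine matching_insert (matching_subset hM (Finset.erase_subset _ _))
            (hfeq ▸ hN.1 f hfN) ?_ ?_
          · intro e he hc
            rw [Finset.mem_erase] at he
            exact he.1 (hc₁uniqM e he.2 hc)
          · intro e he hc
            rw [Finset.mem_erase] at he
            exact hc₂M e he.2 hc
        · intro e he
          rcases Finset.mem_insert.1 he with rfl | he
          · exact Finset.mem_union_right _ hfN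
          · exact Finset.mem_union_left _ (Finset.mem_of_mem_erase he)
        · have h1 : f ∉ M.erase e₀ := fun h => hfM (Finset.mem_of_mem_erase h)
          rw [Finset.card_insert_of_notMem h1, Finset.card_erase_of_mem he₀M]
          have := Finset.card_ne_zero_of_mem he₀M
          omega
        · intro x
          constructor
          · rintro ⟨e, he, hxe⟩
            rcases Finset.mem_insert.1 he with rfl | he
            · rw [← hfeq, Sym2.mem_iff] at hxe
              rcases hxe with rfl | rfl
              · exact Or.inl ⟨⟨e₀, he₀M, hc₁e₀⟩, hc₁z⟩
              · exact Or.inr rfl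
            · rw [Finset.mem_erase] at he
              refine Or.inl ⟨⟨e, he.2, hxe⟩, ?_⟩
              rintro rfl
              exact he.1 (hzuniqM e he.2 hxe)
          · rintro (⟨⟨e, he, hxe⟩, hxz⟩ | rfl)
            · by_cases hee : e = e₀
              · subst hee
                rw [← he₀eq, Sym2.mem_iff] at hxe
                rcases hxe with rfl | rfl
                · exact absurd rfl hxz
                · exact ⟨f, Finset.mem_insert_self _ _, hc₁f⟩
              · exact ⟨e, Finset.mem_insert.2 (Or.inr (Finset.mem_erase.2 ⟨hee, he⟩)), hxe⟩
            · exact ⟨f, Finset.mem_insert_self _ _, hc₂f⟩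
      · -- Case C : c₂ is M-covered; rotate N and recurse
        push_neg at hc₂M
        obtain ⟨g, hgM, hc₂g⟩ := hc₂M
        have hge₀ : g ≠ e₀ := by
          rintro rfl
          rw [← he₀eq, Sym2.mem_iff] at hc₂g
          rcases hc₂g with rfl | rfl
          · exact hc₂z rfl
          · exact hc₂c₁ rfl
        set Nt : Finset (Sym2 V) := insert e₀ (N.erase f) with hNt
        have he₀Nt : e₀ ∈ Nt := Finset.mem_insert_self _ _
        have hNtM : IsMatchingIn H Nt := by
          rw [hNt, ← he₀eq]
          refine matching_insert (matching_subset hN (Finset.erase_subset _ _))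
            (he₀eq ▸ hM.1 e₀ he₀M) ?_ ?_
          · intro e he
            exact hzN e (Finset.mem_of_mem_erase he)
          · intro e he hc
            rw [Finset.mem_erase] at he
            exact he.1 (hc₁uniqN e he.2 hc)
        have hNtcard : Nt.card = N.card := by
          have h1 : e₀ ∉ N.erase f := fun h => he₀N (Finset.mem_of_mem_erase h)
          rw [hNt, Finset.card_insert_of_notMem h1, Finset.card_erase_of_mem hfN]
          have := Finset.card_ne_zero_of_mem hfN
          omega
        have hmeas : (M \ Nt).card ≤ n := by
          have hsub : M \ Nt ⊆ (M \ N).erase e₀ := by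
            intro x hx
            rw [Finset.mem_sdiff] at hx
            rw [Finset.mem_erase, Finset.mem_sdiff]
            have hxe₀ : x ≠ e₀ := fun h => hx.2 (h ▸ he₀Nt)
            refine ⟨hxe₀, hx.1, fun hxN => ?_⟩
            have hxf : x ≠ f := fun h => hfM (h ▸ hx.1)
            exact hx.2 (Finset.mem_insert.2 (Or.inr (Finset.mem_erase.2 ⟨hxf, hxN⟩)))
          have h2 := Finset.card_le_card hsub
          have h3 : e₀ ∈ M \ N := Finset.mem_sdiff.2 ⟨he₀M, he₀N⟩
          rw [Finset.card_erase_of_mem h3] at h2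
          have := Finset.card_ne_zero_of_mem h3
          omega
        have hc₂Nt : ∀ e ∈ Nt, c₂ ∉ e := by
          intro e he hc
          rcases Finset.mem_insert.1 he with rfl | he
          · rw [← he₀eq, Sym2.mem_iff] at hc
            rcases hc with rfl | rfl
            · exact hc₂z rfl
            · exact hc₂c₁ rfl
          · rw [Finset.mem_erase] at he
            exact he.1 (hc₂uniqN e he.2 hc)
        rcases ih M Nt hmeas hM hNtM c₂ ⟨g, hgM, hc₂g⟩ hc₂Nt with ⟨P, hP, hPcard⟩ |
          ⟨K, y, hK, hKsub, hKcard, hyM, hyc₂, hKcov⟩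
        · left
          exact ⟨P, hP, by rw [hPcard, hNtcard]⟩
        · -- lift the swapped matching back across the rotation
          right
          have hzcovM : ∃ e ∈ M, z ∈ e := ⟨e₀, he₀M, hze₀⟩
          have hyz : y ≠ z := by
            rintro rfl
            exact hyM e₀ he₀M hze₀
          have hzcovK : ∃ e ∈ K, z ∈ e := (hKcov z).2 (Or.inl ⟨hzcovM, fun h => hc₂z h.symm⟩)
          obtain ⟨ez, hezK, hzez⟩ := hzcovK
          have heze₀ : ez = e₀ := by
            rcases Finset.mem_union.1 (hKsub hezK) with h | h
            · exact hzuniqM ez h hzez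
            · rcases Finset.mem_insert.1 h with rfl | h
              · rfl
              · exact absurd hzez (hzN ez (Finset.mem_of_mem_erase h))
          have he₀K : e₀ ∈ K := heze₀ ▸ hezK
          have hc₂covK : ∀ e ∈ K, c₂ ∉ e := by
            intro e he hc
            rcases (hKcov c₂).1 ⟨e, he, hc⟩ with ⟨_, hne⟩ | h
            · exact hne rfl
            · exact hyc₂ h.symm
          have hfK : f ∉ K := fun h => hc₂covK f h hc₂f
          have hc₁uniqK : ∀ e ∈ K, c₁ ∈ e → e = e₀ := by
            intro e he hc
            rcases Finset.mem_union.1 (hKsub he) with h | h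
            · exact hc₁uniqM e h hc
            · rcases Finset.mem_insert.1 h with rfl | h
              · rfl
              · rw [Finset.mem_erase] at h
                exact absurd (hc₁uniqN e h.2 hc) h.1
          refine ⟨insert f (K.erase e₀), y, ?_, ?_, ?_, hyM, hyz, ?_⟩
          · rw [← hfeq]
            refine matching_insert (matching_subset hK (Finset.erase_subset _ _))
              (hfeq ▸ hN.1 f hfN) ?_ ?_
            · intro e he hc
              rw [Finset.mem_erase] at he
              exact he.1 (hc₁uniqK e he.2 hc)
            · intro e he hc
              exact hc₂covK e (Finset.mem_of_mem_erase he) hc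
          · intro e he
            rcases Finset.mem_insert.1 he with rfl | he
            · exact Finset.mem_union_right _ hfN
            · have h1 := hKsub (Finset.mem_of_mem_erase he)
              rcases Finset.mem_union.1 h1 with h | h
              · exact Finset.mem_union_left _ h
              · rcases Finset.mem_insert.1 h with rfl | h
                · exact Finset.mem_union_left _ he₀M
                · exact Finset.mem_union_right _ (Finset.mem_of_mem_erase h)
          · have h1 : f ∉ K.erase e₀ := fun h => hfK (Finset.mem_of_mem_erase h)
            rw [Finset.card_insert_of_notMem h1, Finset.card_erase_of_mem he₀K]
            have := Finset.card_ne_zero_of_mem he₀K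
            omega
          · intro x
            constructor
            · rintro ⟨e, he, hxe⟩
              rcases Finset.mem_insert.1 he with rfl | he
              · rw [← hfeq, Sym2.mem_iff] at hxe
                rcases hxe with rfl | rfl
                · exact Or.inl ⟨⟨e₀, he₀M, hc₁e₀⟩, hc₁z⟩
                · exact Or.inl ⟨⟨g, hgM, hc₂g⟩, hc₂z⟩
              · rw [Finset.mem_erase] at he
                rcases (hKcov x).1 ⟨e, he.2, hxe⟩ with ⟨hcovM, _⟩ | h
                · refine Or.inl ⟨hcovM, ?_⟩
                  rintro rfl
                  exact he.1 (matching_unique hK he.2 he₀K hxe hze₀)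
                · exact Or.inr h
            · rintro (⟨⟨e, he, hxe⟩, hxz⟩ | rfl)
              · by_cases hxc₂ : x = c₂
                · subst hxc₂
                  exact ⟨f, Finset.mem_insert_self _ _, hc₂f⟩
                · have hxK : ∃ e ∈ K, x ∈ e := (hKcov x).2 (Or.inl ⟨⟨e, he, hxe⟩, hxc₂⟩)
                  obtain ⟨e', he'K, hxe'⟩ := hxK
                  by_cases he'e₀ : e' = e₀
                  · rw [he'e₀, ← he₀eq, Sym2.mem_iff] at hxe'
                    rcases hxe' with rfl | rfl
                    · exact absurd rfl hxz
                    · exact ⟨f, Finset.mem_insert_self _ _, hc₁f⟩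
                  · exact ⟨e', Finset.mem_insert.2 (Or.inr (Finset.mem_erase.2 ⟨he'e₀, he'K⟩)), hxe'⟩
              · have hyK : ∃ e ∈ K, x ∈ e := (hKcov x).2 (Or.inr rfl)
                obtain ⟨e', he'K, hye'⟩ := hyK
                have he'e₀ : e' ≠ e₀ := by
                  intro hh
                  rw [hh, ← he₀eq, Sym2.mem_iff] at hye'
                  rcases hye' with rfl | rfl
                  · exact hyz rfl
                  · exact hyM e₀ he₀M hc₁e₀
                exact ⟨e', Finset.mem_insert.2 (Or.inr (Finset.mem_erase.2 ⟨he'e₀, he'K⟩)), hye'⟩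

lemma augment_contra {K : Finset (Sym2 V)} (hK : IsMatchingIn H K) (hKcard : K.card = nu H)
    {a b : V} (hab : H.Adj a b) (ha : ∀ e ∈ K, a ∉ e) (hb : ∀ e ∈ K, b ∉ e) : False := by
  have hmem : s(a,b) ∉ K := fun h => ha _ h (Sym2.mem_mk_left a b)
  have hbig : IsMatchingIn H (insert s(a,b) K) :=
    matching_insert hK ((SimpleGraph.mem_edgeSet H).2 hab) ha hb
  have := card_le_nu hbig
  rw [Finset.card_insert_of_notMem hmem] at this
  omega

/-- Gallai-type lemma: a "connected" graph in which no vertex is essential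
has at most `2ν+1` vertices of positive degree. -/
lemma gallai (H : SimpleGraph V)
    (hns : ¬ ∃ A : Finset V, (∀ a b, H.Adj a b → (a ∈ A ↔ b ∈ A)) ∧
      ec (restr H A) ≠ 0 ∧ ec (restr H Aᶜ) ≠ 0)
    (hne : ∀ v, nu H ≤ nu (delV H v)) :
    (suppF H).card ≤ 2 * nu H + 1 := by
  classical
  by_contra hcard
  push_neg at hcard
  have hreach : ∀ u w : V, u ∈ suppF H → w ∈ suppF H → H.Reachable u w := by
    intro u w hu hw
    by_contra hnr
    apply hns
    refine ⟨Finset.univ.filter (fun x => H.Reachable u x), ?_, ?_, ?_⟩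
    · intro a b hab
      simp only [Finset.mem_filter, Finset.mem_univ, true_and]
      exact ⟨fun hh => hh.trans hab.reachable, fun hh => hh.trans hab.symm.reachable⟩
    · obtain ⟨u', hu'⟩ := adj_of_degc_ne_zero (mem_suppF.1 hu)
      rw [ec_eq]
      apply Finset.card_ne_zero_of_mem (a := s(u,u'))
      rw [SimpleGraph.mem_edgeFinset, SimpleGraph.mem_edgeSet]
      refine ⟨hu', ?_, ?_⟩
      · simp only [Finset.mem_filter, Finset.mem_univ, true_and]
        exact SimpleGraph.Reachable.refl u
      · simp only [Finset.mem_filter, Finset.mem_univ, true_and]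
        exact hu'.reachable
    · obtain ⟨w', hw'⟩ := adj_of_degc_ne_zero (mem_suppF.1 hw)
      rw [ec_eq]
      apply Finset.card_ne_zero_of_mem (a := s(w,w'))
      rw [SimpleGraph.mem_edgeFinset, SimpleGraph.mem_edgeSet]
      refine ⟨hw', ?_, ?_⟩
      · simp only [Finset.mem_compl, Finset.mem_filter, Finset.mem_univ, true_and]
        exact hnr
      · simp only [Finset.mem_compl, Finset.mem_filter, Finset.mem_univ, true_and]
        intro hr
        exact hnr (hr.trans hw'.symm.reachable)
  have hQex : ∃ d : ℕ, ∃ M, IsMatchingIn H M ∧ M.card = nu H ∧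
      ∃ u w, u ≠ w ∧ u ∈ suppF H ∧ w ∈ suppF H ∧ (∀ e ∈ M, u ∉ e) ∧ (∀ e ∈ M, w ∉ e) ∧
      ∃ p : H.Walk u w, p.length = d := by
    obtain ⟨M, hM, hMcard⟩ := exists_max_matching H
    have hcle : (suppF H).card ≤ ((suppF H) \ covF M).card + (covF M).card :=
      Finset.card_le_card_sdiff_add_card
    have hcov := covF_card_le (M := M)
    have h2 : 1 < ((suppF H) \ covF M).card := by omega
    obtain ⟨u, hu, w, hw, huw⟩ := Finset.one_lt_card.1 h2
    rw [Finset.mem_sdiff] at hu hw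
    have huexp : ∀ e ∈ M, u ∉ e := fun e he hx => hu.2 (mem_covF.2 ⟨e, he, hx⟩)
    have hwexp : ∀ e ∈ M, w ∉ e := fun e he hx => hw.2 (mem_covF.2 ⟨e, he, hx⟩)
    obtain ⟨p⟩ := hreach u w hu.1 hw.1
    exact ⟨p.length, M, hM, hMcard, u, w, huw, hu.1, hw.1, huexp, hwexp, p, rfl⟩
  obtain ⟨M, hM, hMcard, u, w, huw, husupp, hwsupp, huexp, hwexp, p, hp⟩ := Nat.find_spec hQex
  cases p with
  | nil => exact absurd rfl huw
  | @cons _ z _ hadj q =>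
    rw [SimpleGraph.Walk.length_cons] at hp
    by_cases hzw : z = w
    · subst hzw
      exact augment_contra hM hMcard hadj huexp hwexp
    · have hzsupp : z ∈ suppF H := mem_suppF.2 (degc_ne_zero_of_adj hadj.symm)
      have hzcov : ∃ e ∈ M, z ∈ e := by
        by_contra hzexp
        push_neg at hzexp
        have hzexp' : ∀ e ∈ M, z ∉ e := fun e he hx => (hzexp e he) hx
        exact Nat.find_min hQex (by omega : q.length < Nat.find hQex)
          ⟨M, hM, hMcard, z, w, hzw, hzsupp, hwsupp, hzexp', hwexp, q, rfl⟩
      have hnuz : nu (delV H z) = nu H := le_antisymm (nu_delV_le H z) (hne z)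
      obtain ⟨N, hNdel, hNcard⟩ := exists_max_matching (delV H z)
      have hNH : IsMatchingIn H N := matching_mono delV_le hNdel
      have hNzexp : ∀ e ∈ N, z ∉ e := fun e he => edge_delV_not_mem (hNdel.1 e he)
      rcases Wlem H (M \ N).card M N le_rfl hM hNH z hzcov hNzexp with
        ⟨P, hP, hPcard⟩ | ⟨K, y, hK, _, hKcard, hyM, hyz, hKcov⟩
      · have := card_le_nu hP
        rw [hPcard, hNcard, hnuz] at this
        omega
      · have hzKexp : ∀ e ∈ K, z ∉ e := by
          intro e he hz
          rcases (hKcov z).1 ⟨e, he, hz⟩ with ⟨_, hne'⟩ | hzy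
          · exact hne' rfl
          · exact hyz hzy.symm
        have hKnu : K.card = nu H := hKcard.trans hMcard
        by_cases huy : u = y
        · have hwKexp : ∀ e ∈ K, w ∉ e := by
            intro e he hx
            rcases (hKcov w).1 ⟨e, he, hx⟩ with ⟨⟨e', he', hwe'⟩, _⟩ | hwy
            · exact hwexp e' he' hwe'
            · exact huw (huy.trans hwy.symm)
          exact Nat.find_min hQex (by omega : q.length < Nat.find hQex)
            ⟨K, hK, hKnu, z, w, hzw, hzsupp, hwsupp, hzKexp, hwKexp, q, rfl⟩
        · have huKexp : ∀ e ∈ K, u ∉ e := by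
            intro e he hx
            rcases (hKcov u).1 ⟨e, he, hx⟩ with ⟨⟨e', he', hue'⟩, _⟩ | huy'
            · exact huexp e' he' hue'
            · exact huy huy'
          exact augment_contra hK hKnu hadj huKexp hzKexp

lemma sum_degc_le (H : SimpleGraph V) {D : ℕ} (hdeg : ∀ v ∈ suppF H, degc H v ≤ D) :
    2 * ec H ≤ (suppF H).card * D := by
  rw [← handshake H]
  calc ∑ v ∈ suppF H, degc H v ≤ ∑ _v ∈ suppF H, D := Finset.sum_le_sum hdeg
    _ = (suppF H).card * D := by rw [Finset.sum_const, smul_eq_mul]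

lemma degc_le_supp_card (H : SimpleGraph V) {v : V} (hv : v ∈ suppF H) :
    degc H v ≤ (suppF H).card - 1 := by
  classical
  rw [degc_eq, ← SimpleGraph.card_neighborFinset_eq_degree]
  have hsub : H.neighborFinset v ⊆ (suppF H).erase v := by
    intro x hx
    rw [SimpleGraph.mem_neighborFinset] at hx
    rw [Finset.mem_erase]
    exact ⟨fun h => H.loopless.irrefl v (h ▸ hx), mem_suppF.2 (degc_ne_zero_of_adj hx.symm)⟩
  have h1 := Finset.card_le_card hsub
  rw [Finset.card_erase_of_mem hv] at h1
  exact h1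

/-- Any graph with max degree at most `D` has at most `ν(D+1)` edges. -/
lemma L2 : ∀ (n : ℕ) (H : SimpleGraph V) (D : ℕ), ec H ≤ n → (∀ v, degc H v ≤ D) →
    ec H ≤ nu H * (D + 1) := by
  intro n
  induction n using Nat.strong_induction_on with
  | _ n ih =>
    intro H D hn hdeg
    by_cases hsplit : ∃ A : Finset V, (∀ a b, H.Adj a b → (a ∈ A ↔ b ∈ A)) ∧
        ec (restr H A) ≠ 0 ∧ ec (restr H Aᶜ) ≠ 0
    · obtain ⟨A, hA, hA1, hA2⟩ := hsplit
      have hec := ec_split (H := H) hA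
      have hd1 : ∀ v, degc (restr H A) v ≤ D := fun v => le_trans (degc_mono restr_le v) (hdeg v)
      have hd2 : ∀ v, degc (restr H Aᶜ) v ≤ D := fun v => le_trans (degc_mono restr_le v) (hdeg v)
      have b1 := ih (ec (restr H A)) (by omega) (restr H A) D le_rfl hd1
      have b2 := ih (ec (restr H Aᶜ)) (by omega) (restr H Aᶜ) D le_rfl hd2
      have hnu := nu_split_le H A
      have hmul : (nu (restr H A) + nu (restr H Aᶜ)) * (D+1) ≤ nu H * (D+1) :=
        Nat.mul_le_mul_right _ hnu
      have hexp : (nu (restr H A) + nu (restr H Aᶜ)) * (D+1) =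
          nu (restr H A) * (D+1) + nu (restr H Aᶜ) * (D+1) := by ring
      rw [hexp] at hmul
      omega
    · by_cases hess : ∃ v, nu (delV H v) < nu H
      · obtain ⟨v, hv⟩ := hess
        have hdv : degc H v ≠ 0 := by
          intro h0
          rw [nu_delV_eq_of_deg_zero h0] at hv
          omega
        have hecd := ec_delV H v
        have hd : ∀ u, degc (delV H v) u ≤ D := fun u => le_trans (degc_mono delV_le u) (hdeg u)
        have b := ih (ec (delV H v)) (by omega) (delV H v) D le_rfl hd
        have hnu1 : nu H ≤ nu (delV H v) + 1 := nu_le_nu_delV_succ H v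
        have hnueq : nu H = nu (delV H v) + 1 := by omega
        have hdD := hdeg v
        rw [hnueq]
        have hexpand : (nu (delV H v) + 1) * (D+1) = nu (delV H v) * (D+1) + D + 1 := by ring
        omega
      · push_neg at hess
        have hsmall : (suppF H).card ≤ 2 * nu H + 1 := gallai H hsplit hess
        have s1 := sum_degc_le H (fun v _ => hdeg v)
        have s2 := sum_degc_le H (fun v hv => degc_le_supp_card H hv)
        by_cases hD : D ≤ 2 * nu H
        · have hm : (suppF H).card * D ≤ (2 * nu H + 1) * D := Nat.mul_le_mul_right _ hsmall
          have h2 : (2 * nu H + 1) * D = 2*(nu H * D) + D := by ring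
          have h3 : nu H * (D+1) = nu H * D + nu H := by ring
          omega
        · have hm : (suppF H).card * ((suppF H).card - 1) ≤ (2*nu H + 1) * (2 * nu H) :=
            Nat.mul_le_mul hsmall (by omega)
          have hmul : nu H * (2*nu H + 2) ≤ nu H * (D + 1) :=
            Nat.mul_le_mul_left _ (by omega)
          have hexp : (2*nu H+1)*(2*nu H) = 2 * (nu H * (2*nu H+1)) := by ring
          have hexp2 : nu H * (2*nu H+2) = nu H * (2*nu H+1) + nu H := by ring
          omega

/-- If moreover all vertices of degree exactly `D` have pairwise intersecting closed
neighborhoods, then `2e ≤ 2νD + D`. -/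
lemma L1' : ∀ (n : ℕ) (H : SimpleGraph V) (D : ℕ), ec H ≤ n → (∀ v, degc H v ≤ D) →
    (∀ u₁ u₂, degc H u₁ = D → degc H u₂ = D →
      ∃ x, (x = u₁ ∨ H.Adj u₁ x) ∧ (x = u₂ ∨ H.Adj u₂ x)) →
    2 * ec H ≤ 2 * nu H * D + D := by
  intro n
  induction n using Nat.strong_induction_on with
  | _ n ih =>
    intro H D hn hdeg hc
    by_cases hD0 : D = 0
    · subst hD0
      have hz : ∀ v ∈ suppF H, degc H v ≤ 0 := fun v _ => hdeg v
      have := sum_degc_le H hz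
      omega
    have hD1 : 1 ≤ D := by omega
    by_cases hsplit : ∃ A : Finset V, (∀ a b, H.Adj a b → (a ∈ A ↔ b ∈ A)) ∧
        ec (restr H A) ≠ 0 ∧ ec (restr H Aᶜ) ≠ 0
    · obtain ⟨A, hA, hA1, hA2⟩ := hsplit
      have hec := ec_split (H := H) hA
      have hd1 : ∀ v, degc (restr H A) v ≤ D := fun v => le_trans (degc_mono restr_le v) (hdeg v)
      have hd2 : ∀ v, degc (restr H Aᶜ) v ≤ D := fun v => le_trans (degc_mono restr_le v) (hdeg v)
      have hnu := nu_split_le H A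
      -- a vertex that is full on one side is full in H, with the same closed neighborhood side
      have hfullA : ∀ u, degc (restr H A) u = D → degc H u = D ∧ u ∈ A := by
        intro u hu
        have hne0 : degc (restr H A) u ≠ 0 := by omega
        obtain ⟨x, hx⟩ := adj_of_degc_ne_zero hne0
        refine ⟨le_antisymm (hdeg u) ?_, hx.2.1⟩
        rw [← hu]
        exact degc_mono restr_le u
      have hfullAc : ∀ u, degc (restr H Aᶜ) u = D → degc H u = D ∧ u ∉ A := by
        intro u hu
        have hne0 : degc (restr H Aᶜ) u ≠ 0 := by omega
        obtain ⟨x, hx⟩ := adj_of_degc_ne_zero hne0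
        refine ⟨le_antisymm (hdeg u) ?_, Finset.mem_compl.1 hx.2.1⟩
        rw [← hu]
        exact degc_mono restr_le u
      have hnotboth : ¬((∃ u, degc (restr H A) u = D) ∧ (∃ u, degc (restr H Aᶜ) u = D)) := by
        rintro ⟨⟨u₁, hu₁⟩, ⟨u₂, hu₂⟩⟩
        obtain ⟨hu₁D, hu₁A⟩ := hfullA u₁ hu₁
        obtain ⟨hu₂D, hu₂A⟩ := hfullAc u₂ hu₂
        obtain ⟨x, hx₁, hx₂⟩ := hc u₁ u₂ hu₁D hu₂D
        have hxA : x ∈ A := by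
          rcases hx₁ with rfl | hadj
          · exact hu₁A
          · exact (hA u₁ x hadj).1 hu₁A
        have hxA' : x ∉ A := by
          rcases hx₂ with rfl | hadj
          · exact hu₂A
          · intro hxa
            exact hu₂A ((hA u₂ x hadj).2 hxa)
        exact hxA' hxA
      -- recursion on the side containing the full vertices (if any), L2 on the other
      by_cases hfA : ∃ u, degc (restr H A) u = D
      · have hnfAc : ∀ v, degc (restr H Aᶜ) v ≤ D - 1 := by
          intro v
          have h1 := hd2 v
          have h2 : degc (restr H Aᶜ) v ≠ D := fun h => hnotboth ⟨hfA, ⟨v, h⟩⟩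
          omega
        have b2 := L2 (ec (restr H Aᶜ)) (restr H Aᶜ) (D-1) le_rfl hnfAc
        have hcA : ∀ u₁ u₂, degc (restr H A) u₁ = D → degc (restr H A) u₂ = D →
            ∃ x, (x = u₁ ∨ (restr H A).Adj u₁ x) ∧ (x = u₂ ∨ (restr H A).Adj u₂ x) := by
          intro u₁ u₂ h₁ h₂
          obtain ⟨h₁D, h₁A⟩ := hfullA u₁ h₁
          obtain ⟨h₂D, h₂A⟩ := hfullA u₂ h₂
          obtain ⟨x, hx₁, hx₂⟩ := hc u₁ u₂ h₁D h₂D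
          refine ⟨x, ?_, ?_⟩
          · rcases hx₁ with rfl | hadj
            · exact Or.inl rfl
            · exact Or.inr ⟨hadj, h₁A, (hA u₁ x hadj).1 h₁A⟩
          · rcases hx₂ with rfl | hadj
            · exact Or.inl rfl
            · exact Or.inr ⟨hadj, h₂A, (hA u₂ x hadj).1 h₂A⟩
        have b1 := ih (ec (restr H A)) (by omega) (restr H A) D le_rfl hd1 hcA
        have hmul : (nu (restr H A) + nu (restr H Aᶜ)) * D ≤ nu H * D :=
          Nat.mul_le_mul_right _ hnu
        have hexp : (nu (restr H A) + nu (restr H Aᶜ)) * D =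
            nu (restr H A) * D + nu (restr H Aᶜ) * D := by ring
        rw [hexp] at hmul
        have hD1' : nu (restr H Aᶜ) * (D - 1 + 1) = nu (restr H Aᶜ) * D := by
          congr 1
          omega
        rw [hD1'] at b2
        have n1 : 2 * nu (restr H A) * D = 2 * (nu (restr H A) * D) := by ring
        have n2 : 2 * nu H * D = 2 * (nu H * D) := by ring
        omega
      · have hnfA : ∀ v, degc (restr H A) v ≤ D - 1 := by
          intro v
          have h1 := hd1 v
          have h2 : degc (restr H A) v ≠ D := fun h => hfA ⟨v, h⟩
          omega
        have b1 := L2 (ec (restr H A)) (restr H A) (D-1) le_rfl hnfA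
        have hcAc : ∀ u₁ u₂, degc (restr H Aᶜ) u₁ = D → degc (restr H Aᶜ) u₂ = D →
            ∃ x, (x = u₁ ∨ (restr H Aᶜ).Adj u₁ x) ∧ (x = u₂ ∨ (restr H Aᶜ).Adj u₂ x) := by
          intro u₁ u₂ h₁ h₂
          obtain ⟨h₁D, h₁A⟩ := hfullAc u₁ h₁
          obtain ⟨h₂D, h₂A⟩ := hfullAc u₂ h₂
          obtain ⟨x, hx₁, hx₂⟩ := hc u₁ u₂ h₁D h₂D
          refine ⟨x, ?_, ?_⟩
          · rcases hx₁ with rfl | hadj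
            · exact Or.inl rfl
            · refine Or.inr ⟨hadj, Finset.mem_compl.2 h₁A, Finset.mem_compl.2 ?_⟩
              intro hxa
              exact h₁A ((hA u₁ x hadj).2 hxa)
          · rcases hx₂ with rfl | hadj
            · exact Or.inl rfl
            · refine Or.inr ⟨hadj, Finset.mem_compl.2 h₂A, Finset.mem_compl.2 ?_⟩
              intro hxa
              exact h₂A ((hA u₂ x hadj).2 hxa)
        have b2 := ih (ec (restr H Aᶜ)) (by omega) (restr H Aᶜ) D le_rfl hd2 hcAc
        have hmul : (nu (restr H A) + nu (restr H Aᶜ)) * D ≤ nu H * D :=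
          Nat.mul_le_mul_right _ hnu
        have hexp : (nu (restr H A) + nu (restr H Aᶜ)) * D =
            nu (restr H A) * D + nu (restr H Aᶜ) * D := by ring
        rw [hexp] at hmul
        have hD1' : nu (restr H A) * (D - 1 + 1) = nu (restr H A) * D := by
          congr 1
          omega
        rw [hD1'] at b1
        have n1 : 2 * nu (restr H Aᶜ) * D = 2 * (nu (restr H Aᶜ) * D) := by ring
        have n2 : 2 * nu H * D = 2 * (nu H * D) := by ring
        omega
    · by_cases hess : ∃ v, nu (delV H v) < nu H
      · obtain ⟨v, hv⟩ := hess
        have hdv : degc H v ≠ 0 := by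
          intro h0
          rw [nu_delV_eq_of_deg_zero h0] at hv
          omega
        have hecd := ec_delV H v
        have hd : ∀ u, degc (delV H v) u ≤ D := fun u => le_trans (degc_mono delV_le u) (hdeg u)
        have hdegv0 : degc (delV H v) v = 0 := by
          classical
          rw [degc_eq, ← SimpleGraph.card_neighborFinset_eq_degree]
          rw [Finset.card_eq_zero]
          ext x
          simp only [SimpleGraph.mem_neighborFinset, Finset.notMem_empty, iff_false]
          rintro ⟨_, hvv, _⟩
          exact hvv rfl
        have hfull : ∀ u, degc (delV H v) u = D →
            degc H u = D ∧ u ≠ v ∧ ¬ H.Adj u v := by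
          intro u hu
          classical
          have huv : u ≠ v := by
            intro h
            rw [h, hdegv0] at hu
            omega
          have hsub : (delV H v).neighborFinset u ⊆ H.neighborFinset u := by
            intro x hx
            rw [SimpleGraph.mem_neighborFinset] at hx ⊢
            exact hx.1
          have hdd : degc H u = D := le_antisymm (hdeg u) (by
            rw [← hu]
            exact degc_mono delV_le u)
          have hcards : (H.neighborFinset u).card ≤ ((delV H v).neighborFinset u).card := by
            have e1 : ((delV H v).neighborFinset u).card = D := by
              rw [SimpleGraph.card_neighborFinset_eq_degree, ← degc_eq]
              exact hu
            have e2 : (H.neighborFinset u).card = D := by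
              rw [SimpleGraph.card_neighborFinset_eq_degree, ← degc_eq]
              exact hdd
            omega
          have heq := Finset.eq_of_subset_of_card_le hsub hcards
          refine ⟨hdd, huv, ?_⟩
          intro hadj
          have : v ∈ (delV H v).neighborFinset u := by
            rw [heq, SimpleGraph.mem_neighborFinset]
            exact hadj
          rw [SimpleGraph.mem_neighborFinset] at this
          exact this.2.2 rfl
        have hcd : ∀ u₁ u₂, degc (delV H v) u₁ = D → degc (delV H v) u₂ = D →
            ∃ x, (x = u₁ ∨ (delV H v).Adj u₁ x) ∧ (x = u₂ ∨ (delV H v).Adj u₂ x) := by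
          intro u₁ u₂ h₁ h₂
          obtain ⟨h₁D, h₁v, h₁adj⟩ := hfull u₁ h₁
          obtain ⟨h₂D, h₂v, h₂adj⟩ := hfull u₂ h₂
          obtain ⟨x, hx₁, hx₂⟩ := hc u₁ u₂ h₁D h₂D
          have hxv : x ≠ v := by
            rcases hx₁ with rfl | hadj
            · exact h₁v
            · intro h
              exact h₁adj (h ▸ hadj)
          refine ⟨x, ?_, ?_⟩
          · rcases hx₁ with rfl | hadj
            · exact Or.inl rfl
            · exact Or.inr ⟨hadj, h₁v, hxv⟩
          · rcases hx₂ with rfl | hadj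
            · exact Or.inl rfl
            · exact Or.inr ⟨hadj, h₂v, hxv⟩
        have b := ih (ec (delV H v)) (by omega) (delV H v) D le_rfl hd hcd
        have hnu1 : nu H ≤ nu (delV H v) + 1 := nu_le_nu_delV_succ H v
        have hnueq : nu H = nu (delV H v) + 1 := by omega
        have hdD := hdeg v
        rw [hnueq]
        have hexpand : 2 * (nu (delV H v) + 1) * D = 2 * nu (delV H v) * D + 2 * D := by ring
        omega
      · push_neg at hess
        have hsmall : (suppF H).card ≤ 2 * nu H + 1 := gallai H hsplit hess
        have s1 := sum_degc_le H (fun v _ => hdeg v)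
        have hm : (suppF H).card * D ≤ (2 * nu H + 1) * D := Nat.mul_le_mul_right _ hsmall
        have h2 : (2 * nu H + 1) * D = 2 * nu H * D + D := by ring
        omega

end basic

end StarFree

/-- `G` contains a copy of the star `K_{1,m}`: a center `c` with `m` distinct neighbors. -/
def HasStar {V : Type*} (G : SimpleGraph V) (m : ℕ) : Prop :=
  ∃ (c : V) (L : Finset V), L.card = m ∧ c ∉ L ∧ ∀ x ∈ L, G.Adj c x

/-- `G` contains two vertex-disjoint copies of the star `K_{1,m}`. -/
def HasTwoDisjointStars {V : Type*} [DecidableEq V] (G : SimpleGraph V) (m : ℕ) : Prop :=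
  ∃ (c₁ c₂ : V) (L₁ L₂ : Finset V), L₁.card = m ∧ L₂.card = m ∧ c₁ ∉ L₁ ∧ c₂ ∉ L₂ ∧
    (∀ x ∈ L₁, G.Adj c₁ x) ∧ (∀ x ∈ L₂, G.Adj c₂ x) ∧
    Disjoint (insert c₁ L₁) (insert c₂ L₂)

/-- A `{K_{1,k}, kK₂, 2K_{1,k-1}}`-free graph has at most `k² - (3k-1)/2` edges for
odd `k`, and at most `k² - 3k/2` edges for even `k`. -/
theorem stmt6 {V : Type*} [Fintype V] [DecidableEq V]
    (G : SimpleGraph V) [DecidableRel G.Adj] (k : ℕ) (hk : 1 ≤ k)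
    (hstar : ¬ HasStar G k)
    (hmatch : ∀ M : Finset (Sym2 V), IsMatchingIn G M → M.card < k)
    (h2star : ¬ HasTwoDisjointStars G (k - 1)) :
    (Odd k → G.edgeFinset.card ≤ k ^ 2 - (3 * k - 1) / 2) ∧
      (Even k → G.edgeFinset.card ≤ k ^ 2 - 3 * k / 2) := by
  classical
  have hdeg : ∀ v, StarFree.degc G v ≤ k - 1 := by
    intro v
    by_contra hlt
    push_neg at hlt
    apply hstar
    rw [StarFree.degc_eq] at hlt
    have hk' : k ≤ (G.neighborFinset v).card := by
      rw [SimpleGraph.card_neighborFinset_eq_degree]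
      omega
    obtain ⟨L, hLsub, hLcard⟩ := Finset.exists_subset_card_eq hk'
    refine ⟨v, L, hLcard, ?_, ?_⟩
    · intro hvL
      have := hLsub hvL
      rw [SimpleGraph.mem_neighborFinset] at this
      exact G.loopless.irrefl v this
    · intro x hx
      have := hLsub hx
      rw [SimpleGraph.mem_neighborFinset] at this
      exact this
  have hnu : StarFree.nu G ≤ k - 1 := by
    obtain ⟨M, hM, hcard⟩ := StarFree.exists_max_matching G
    have := hmatch M hM
    omega
  have hc : ∀ u₁ u₂, StarFree.degc G u₁ = k-1 → StarFree.degc G u₂ = k-1 →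
      ∃ x, (x = u₁ ∨ G.Adj u₁ x) ∧ (x = u₂ ∨ G.Adj u₂ x) := by
    intro u₁ u₂ h₁ h₂
    by_contra hno
    push_neg at hno
    apply h2star
    refine ⟨u₁, u₂, G.neighborFinset u₁, G.neighborFinset u₂, ?_, ?_, ?_, ?_, ?_, ?_, ?_⟩
    · rw [SimpleGraph.card_neighborFinset_eq_degree, ← StarFree.degc_eq]
      exact h₁
    · rw [SimpleGraph.card_neighborFinset_eq_degree, ← StarFree.degc_eq]
      exact h₂
    · intro hm
      rw [SimpleGraph.mem_neighborFinset] at hm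
      exact G.loopless.irrefl u₁ hm
    · intro hm
      rw [SimpleGraph.mem_neighborFinset] at hm
      exact G.loopless.irrefl u₂ hm
    · intro x hx
      rw [SimpleGraph.mem_neighborFinset] at hx
      exact hx
    · intro x hx
      rw [SimpleGraph.mem_neighborFinset] at hx
      exact hx
    · rw [Finset.disjoint_left]
      intro x hx₁ hx₂
      have hp : x ≠ u₂ ∧ ¬ G.Adj u₂ x := by
        rcases Finset.mem_insert.1 hx₁ with rfl | hx₁
        · exact hno x (Or.inl rfl)
        · rw [SimpleGraph.mem_neighborFinset] at hx₁
          exact hno x (Or.inr hx₁)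
      rcases Finset.mem_insert.1 hx₂ with h2 | hx₂
      · exact hp.1 h2
      · rw [SimpleGraph.mem_neighborFinset] at hx₂
        exact hp.2 hx₂
  have hmain := StarFree.L1' (StarFree.ec G) G (k-1) le_rfl hdeg hc
  have hEec : G.edgeFinset.card = StarFree.ec G := (StarFree.ec_eq G).symm
  have hstep : 2 * StarFree.nu G * (k-1) ≤ 2 * (k-1) * (k-1) := by
    apply Nat.mul_le_mul_right
    omega
  have hbound : 2 * G.edgeFinset.card ≤ 2*(k-1)*(k-1) + (k-1) := by
    rw [hEec]
    omega
  constructor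
  · rintro ⟨r, rfl⟩
    set q := r * r with hq
    have e1 : 2*(2*r+1-1)*(2*r+1-1) + (2*r+1-1) = 8*q + 2*r := by
      have h1 : 2*r+1-1 = 2*r := by omega
      rw [h1, hq]
      ring
    rw [e1] at hbound
    have e3 : (2*r+1)^2 = 4*q + 4*r + 1 := by
      rw [hq]
      ring
    rw [e3]
    have e4 : (3*(2*r+1) - 1)/2 = 3*r + 1 := by omega
    rw [e4]
    omega
  · rintro ⟨r, rfl⟩
    obtain ⟨s, rfl⟩ : ∃ s, r = s + 1 := ⟨r - 1, by omega⟩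
    set q := s * s with hq
    have e1 : 2*(s+1+(s+1)-1)*(s+1+(s+1)-1) + (s+1+(s+1)-1) = 8*q + 10*s + 3 := by
      have h1 : s+1+(s+1)-1 = 2*s+1 := by omega
      rw [h1, hq]
      ring
    rw [e1] at hbound
    have e3 : (s+1+(s+1))^2 = 4*q + 8*s + 4 := by
      rw [hq]
      ring
    rw [e3]
    have e4 : 3*(s+1+(s+1))/2 = 3*s + 3 := by omega
    rw [e4]
    omega
end

section
/- Fix an integer k ≥ 2 and define f(x) = x(x−1)/2 for integers 1 ≤ x ≤ k−1 and f(x) = ⌊(k−1)x/2⌋ for integers x ≥ k. Then for all odd integers x₁, x₂ with 1 ≤ x₁ ≤ k−1 and x₁ ≤ x₂, one has f(x₁) + f(x₂) ≤ f(x₁ + x₂ − 1). -/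
/-- The function `f(x) = x(x-1)/2` for `x ≤ k-1` and `f(x) = ⌊(k-1)x/2⌋` for `x ≥ k`. -/
def f (k x : ℕ) : ℕ := if x ≤ k - 1 then x * (x - 1) / 2 else (k - 1) * x / 2

lemma f_helper (n : ℕ) : (2*n+1) * (2*n) / 2 = (2*n+1)*n := by
  rw [show (2*n+1) * (2*n) = 2*((2*n+1)*n) by ring]
  exact Nat.mul_div_cancel_left _ (by norm_num)

lemma f_helper' (n : ℕ) : (2*n+1) * (2*n+1-1) / 2 = (2*n+1)*n := by
  rw [Nat.add_sub_cancel, f_helper]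

theorem stmt9 (k : ℕ) (hk : 2 ≤ k) (x₁ x₂ : ℕ) (h₁ : Odd x₁) (h₂ : Odd x₂)
    (hx₁ : 1 ≤ x₁) (hx₁k : x₁ ≤ k - 1) (hle : x₁ ≤ x₂) :
    f k x₁ + f k x₂ ≤ f k (x₁ + x₂ - 1) := by
  obtain ⟨a, ha⟩ := h₁
  obtain ⟨b, hb⟩ := h₂
  subst ha hb
  obtain ⟨m, hm⟩ : ∃ m, k = m + 1 := ⟨k-1, by omega⟩
  subst hm
  simp only [f, Nat.add_sub_cancel] at *
  have hsum : 2*a+1 + (2*b+1) - 1 = 2*(a+b)+1 := by omega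
  rw [hsum]
  by_cases h2 : 2*b+1 ≤ m
  · by_cases h3 : 2*(a+b)+1 ≤ m
    · rw [if_pos hx₁k, if_pos h2, if_pos h3, f_helper, f_helper, f_helper']
      nlinarith
    · rw [if_pos hx₁k, if_pos h2, if_neg h3, f_helper, f_helper]
      have h4 : ((2*a+1)*a + (2*b+1)*b) * 2 ≤ m * (2*(a+b)+1) := by nlinarith
      exact (Nat.le_div_iff_mul_le (by norm_num)).mpr h4
  · have h3 : ¬ (2*(a+b)+1 ≤ m) := by omega
    rw [if_pos hx₁k, if_neg h2, if_neg h3, f_helper]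
    rw [show m * (2*(a+b)+1) = m*(2*b+1) + 2*(m*a) by ring,
      Nat.add_mul_div_left _ _ (by norm_num : (0:ℕ) < 2)]
    have h5 : (2*a+1)*a ≤ m*a := Nat.mul_le_mul_right a (by omega)
    linarith
end

section
/- Let k ≥ 3, s ≥ 1, p ≥ 1 be integers and suppose ν_j, Δ_j ≥ 0 satisfy: for each i and each j the constraint Δ_i + Σ_{j≠i} ν_j ≤ k−1, and suppose there exists an index i with ν_i ≤ Δ_i. Then Σ_j ν_j(Δ_j + 1) ≤ (k−1)² < k² − (3/2)k. -/
theorem stmt14 (k p : ℕ) (hk : 3 ≤ k) (hp : 1 ≤ p)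
    (ν Δ : Fin p → ℕ) (hΔ : ∀ j, Δ j ≤ k - 2)
    (hcon : ∀ i, Δ i + ∑ j ∈ Finset.univ.erase i, ν j ≤ k - 1)
    (hex : ∃ i, ν i ≤ Δ i) :
    (∑ j, ν j * (Δ j + 1)) ≤ (k - 1) ^ 2 ∧ (k - 1) ^ 2 < k ^ 2 - 3 * k / 2 := by
  constructor
  · obtain ⟨i, hi⟩ := hex
    have hsum : ∑ j, ν j ≤ k - 1 := by
      rw [← Finset.add_sum_erase Finset.univ ν (Finset.mem_univ i)]
      exact le_trans (Nat.add_le_add_right hi _) (hcon i)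
    calc ∑ j, ν j * (Δ j + 1) ≤ ∑ j, ν j * (k - 1) := by
            apply Finset.sum_le_sum
            intro j _
            exact Nat.mul_le_mul_left _ (by have := hΔ j; omega)
      _ = (∑ j, ν j) * (k - 1) := by rw [Finset.sum_mul]
      _ ≤ (k - 1) * (k - 1) := Nat.mul_le_mul_right _ hsum
      _ = (k - 1) ^ 2 := (sq _).symm
  · obtain ⟨m, rfl⟩ := Nat.exists_eq_add_of_le hk
    have h1 : (3 + m - 1) ^ 2 = m * m + 4 * m + 4 := by
      have : 3 + m - 1 = m + 2 := by omega
      rw [this]; ring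
    have h2 : (3 + m) ^ 2 = m * m + 6 * m + 9 := by ring
    rw [h1, h2]
    omega
end

section
/- Let p ≥ 3 and let F be a graph with an embedding of its blown-up version: if F is a tree on at most ℓ vertices with ℓ = |V(F^{p+1})|, then F^{p+1} is a subgraph of the join P_ℓ ∨ K((p−1)ℓ; p−1) of a path on ℓ vertices with the balanced complete (p−1)-partite graph with parts of size ℓ. -/
/-- The join `G ∨ H` of two graphs: take disjoint copies of `G` and `H` and add all
edges between them. -/
def graphJoin {V W : Type*} (G : SimpleGraph V) (H : SimpleGraph W) :
    SimpleGraph (V ⊕ W) where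
  Adj x y :=
    match x, y with
    | Sum.inl a, Sum.inl b => G.Adj a b
    | Sum.inr a, Sum.inr b => H.Adj a b
    | _, _ => True
  symm := by
    constructor
    rintro (a | a) (b | b) h
    · exact h.symm
    · trivial
    · trivial
    · exact h.symm
  loopless := by
    constructor
    rintro (a | a) h
    · exact G.irrefl h
    · exact H.irrefl h

/-- The edge blow-up `F^{q+2}` of `F`: each edge of `F` is replaced by a clique on its two
endpoints together with `q` new vertices, the new vertices being distinct for distinct
edges. (For the blow-up by cliques of size `p+1`, take `q = p-1`.) -/
def edgeBlowup {V : Type*} (F : SimpleGraph V) (q : ℕ) :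
    SimpleGraph (V ⊕ (F.edgeSet × Fin q)) where
  Adj x y :=
    match x, y with
    | Sum.inl a, Sum.inl b => F.Adj a b
    | Sum.inl a, Sum.inr e => a ∈ (e.1 : Sym2 V)
    | Sum.inr e, Sum.inl a => a ∈ (e.1 : Sym2 V)
    | Sum.inr e, Sum.inr e' => e.1 = e'.1 ∧ e.2 ≠ e'.2
  symm := by
    constructor
    rintro (a | e) (b | e') h
    · exact h.symm
    · exact h
    · exact h
    · exact ⟨h.1.symm, h.2.symm⟩
  loopless := by
    constructor
    rintro (a | e) h
    · exact F.irrefl h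
    · exact h.2 rfl


lemma tree_two_coloring {V : Type*} [DecidableEq V] (F : SimpleGraph V) (hF : F.IsTree) :
    ∃ c : V → Bool, ∀ u v, F.Adj u v → c u ≠ c v := by
  obtain ⟨r⟩ := hF.isConnected.nonempty
  have hu := hF.existsUnique_path
  choose f hf using fun v => (hu r v).exists
  have key : ∀ u v, F.Adj u v →
      (f u).length + 1 = (f v).length ∨ (f v).length + 1 = (f u).length := by
    intro u v hadj
    by_cases hv : v ∈ (f u).support
    · right
      have h1 : ((f u).takeUntil v hv).IsPath := (hf u).takeUntil hv
      have h2 : ((f u).dropUntil v hv).IsPath := (hf u).dropUntil hv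
      have hq : f v = (f u).takeUntil v hv := (hu r v).unique (hf v) h1
      have hs : (f u).dropUntil v hv =
          SimpleGraph.Walk.cons hadj.symm SimpleGraph.Walk.nil :=
        (hu v u).unique h2 (SimpleGraph.Path.singleton hadj.symm).isPath
      have := congrArg SimpleGraph.Walk.length ((f u).take_spec hv)
      rw [SimpleGraph.Walk.length_append, hs] at this
      simp only [SimpleGraph.Walk.length_cons, SimpleGraph.Walk.length_nil] at this
      rw [hq]
      omega
    · left
      have h1 : ((f u).concat hadj).IsPath := by
        rw [← SimpleGraph.Walk.isPath_reverse_iff, SimpleGraph.Walk.reverse_concat]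
        exact ((hf u).reverse).cons (by simpa using hv)
      have hq : f v = (f u).concat hadj := (hu r v).unique (hf v) h1
      rw [hq, SimpleGraph.Walk.length_concat]
  refine ⟨fun v => decide ((f v).length % 2 = 1), ?_⟩
  intro u v hadj
  rcases key u v hadj with h | h <;> simp only [ne_eq, decide_eq_decide] <;> omega

/-- The edge blow-up of a tree `F` by cliques of size `p+1` (with `p ≥ 3`) embeds into
the join of the path `P_ℓ` with the complete `(p-1)`-partite graph with parts of
size `ℓ`, where `ℓ` is the number of vertices of the blow-up. -/
theorem stmt18 {V : Type*} [Fintype V] [DecidableEq V]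
    (p : ℕ) (hp : 3 ≤ p) (F : SimpleGraph V) [DecidableRel F.Adj] (hF : F.IsTree)
    (ℓ : ℕ) (hℓ : ℓ = Fintype.card (V ⊕ (F.edgeSet × Fin (p - 1)))) :
    ∃ φ : edgeBlowup F (p - 1) →g
        graphJoin (SimpleGraph.pathGraph ℓ)
          (SimpleGraph.completeMultipartiteGraph fun _ : Fin (p - 1) => Fin ℓ),
      Function.Injective φ := by
  classical
  obtain ⟨c, hc⟩ := tree_two_coloring F hF
  set n := Fintype.card V with hn
  set m := Fintype.card F.edgeSet with hm
  have hq : 2 ≤ p - 1 := by omega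
  have hℓ' : ℓ = n + m * (p - 1) := by
    rw [hℓ, Fintype.card_sum, Fintype.card_prod, Fintype.card_fin]
  have hm2 : 2 * m ≤ ℓ := by
    have : m * 2 ≤ m * (p - 1) := Nat.mul_le_mul_left m hq
    omega
  have hnl : n ≤ ℓ := by omega
  let eV := Fintype.equivFin V
  let eE := Fintype.equivFin F.edgeSet
  let part : Bool → Fin (p - 1) := fun b => ⟨if b then 1 else 0, by split <;> omega⟩
  have hpart : ∀ b, (part b : ℕ) < 2 := by intro b; simp only [part]; split <;> omega
  have hpartinj : Function.Injective part := by
    intro a b hab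
    cases a <;> cases b <;> simp [part, Fin.ext_iff] at hab ⊢
  let g : V ⊕ (F.edgeSet × Fin (p - 1)) →
      Fin ℓ ⊕ (Σ _ : Fin (p - 1), Fin ℓ) :=
    Sum.elim
      (fun a => Sum.inr ⟨part (c a), ⟨(eV a : ℕ), by have := (eV a).isLt; omega⟩⟩)
      (fun ei =>
        if h : (ei.2 : ℕ) < 2 then
          Sum.inl ⟨2 * (eE ei.1 : ℕ) + (ei.2 : ℕ), by have := (eE ei.1).isLt; omega⟩
        else
          Sum.inr ⟨ei.2, ⟨(eE ei.1 : ℕ), by have := (eE ei.1).isLt; omega⟩⟩)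
  have hmap : ∀ {x y}, (edgeBlowup F (p - 1)).Adj x y →
      (graphJoin (SimpleGraph.pathGraph ℓ)
        (SimpleGraph.completeMultipartiteGraph fun _ : Fin (p - 1) => Fin ℓ)).Adj (g x) (g y) := by
    rintro (a | ⟨e, i⟩) (b | ⟨e', j⟩) hadj
    · -- both original: distinct parts
      have hab : F.Adj a b := hadj
      show (graphJoin _ _).Adj (Sum.inr _) (Sum.inr _)
      show part (c a) ≠ part (c b)
      exact fun h => hc a b hab (hpartinj h)
    · -- original vs new
      simp only [g, Sum.elim_inl, Sum.elim_inr]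
      by_cases h : (j : ℕ) < 2
      · rw [dif_pos h]; trivial
      · rw [dif_neg h]
        show part (c a) ≠ j
        intro hh
        have := hpart (c a)
        rw [hh] at this
        omega
    · simp only [g, Sum.elim_inl, Sum.elim_inr]
      by_cases h : (i : ℕ) < 2
      · rw [dif_pos h]; trivial
      · rw [dif_neg h]
        show (i : Fin (p-1)) ≠ part (c b)
        intro hh
        have := hpart (c b)
        rw [← hh] at this
        omega
    · -- both new
      have he : e = e' := hadj.1
      have hij : (i : ℕ) ≠ (j : ℕ) := fun h => hadj.2 (Fin.ext h)
      simp only [g, Sum.elim_inr]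
      by_cases h1 : (i : ℕ) < 2 <;> by_cases h2 : (j : ℕ) < 2
      · rw [dif_pos h1, dif_pos h2]
        show (SimpleGraph.pathGraph ℓ).Adj _ _
        rw [SimpleGraph.pathGraph_adj]
        subst he
        simp only [Fin.mk_one, Fin.val_mk]
        omega
      · rw [dif_pos h1, dif_neg h2]; trivial
      · rw [dif_neg h1, dif_pos h2]; trivial
      · rw [dif_neg h1, dif_neg h2]
        show i ≠ j
        exact hadj.2
  have hginj : Function.Injective g := by
    rintro (a | ⟨e, i⟩) (b | ⟨e', j⟩) hxy
    · simp only [g, Sum.elim_inl, Sum.inr.injEq, Sigma.mk.inj_iff] at hxy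
      have : (eV a : ℕ) = (eV b : ℕ) := by
        have := eq_of_heq hxy.2
        simpa [Fin.ext_iff] using this
      exact congrArg Sum.inl (eV.injective (Fin.ext this))
    · simp only [g, Sum.elim_inl, Sum.elim_inr] at hxy
      by_cases h : (j : ℕ) < 2
      · rw [dif_pos h] at hxy; exact absurd hxy (by simp)
      · rw [dif_neg h] at hxy
        simp only [Sum.inr.injEq, Sigma.mk.inj_iff] at hxy
        have := hpart (c a)
        rw [hxy.1] at this
        omega
    · simp only [g, Sum.elim_inl, Sum.elim_inr] at hxy
      by_cases h : (i : ℕ) < 2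
      · rw [dif_pos h] at hxy; exact absurd hxy (by simp)
      · rw [dif_neg h] at hxy
        simp only [Sum.inr.injEq, Sigma.mk.inj_iff] at hxy
        have := hpart (c b)
        rw [← hxy.1] at this
        omega
    · simp only [g, Sum.elim_inr] at hxy
      by_cases h1 : (i : ℕ) < 2 <;> by_cases h2 : (j : ℕ) < 2
      · rw [dif_pos h1, dif_pos h2] at hxy
        simp only [Sum.inl.injEq, Fin.ext_iff] at hxy
        have hlt1 := (eE e).isLt
        have hlt2 := (eE e').isLt
        have hee : (eE e : ℕ) = (eE e' : ℕ) := by omega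
        have hij : (i : ℕ) = (j : ℕ) := by omega
        have : e = e' := eE.injective (Fin.ext hee)
        subst this
        exact congrArg Sum.inr (Prod.ext rfl (Fin.ext hij))
      · rw [dif_pos h1, dif_neg h2] at hxy; exact absurd hxy (by simp)
      · rw [dif_neg h1, dif_pos h2] at hxy; exact absurd hxy (by simp)
      · rw [dif_neg h1, dif_neg h2] at hxy
        simp only [Sum.inr.injEq, Sigma.mk.inj_iff] at hxy
        have hij : i = j := hxy.1
        have : (eE e : ℕ) = (eE e' : ℕ) := by
          have := eq_of_heq hxy.2
          simpa [Fin.ext_iff] using this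
        have : e = e' := eE.injective (Fin.ext this)
        subst hij; subst this
        rfl
  exact ⟨⟨g, hmap⟩, hginj⟩
end

section
/- Let p ≥ 3 and let F be a tree with ℓ = |V(F^{p+1})|. Then F^{p+1} is a subgraph of ℓP₂ ∨ K(2(p−1)ℓ; p−1), the join of a matching of size ℓ with the balanced complete (p−1)-partite graph with parts of size 2ℓ. -/
/-- The graph `ℓP₂`: a perfect matching of `ℓ` disjoint edges. -/
def matchingGraph (ℓ : ℕ) : SimpleGraph (Fin ℓ × Fin 2) where
  Adj x y := x.1 = y.1 ∧ x.2 ≠ y.2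
  symm := by
    constructor
    rintro x y ⟨h1, h2⟩
    exact ⟨h1.symm, h2.symm⟩
  loopless := by
    constructor
    rintro x ⟨h1, h2⟩
    exact h2 rfl

open SimpleGraph in
lemma concat_isPath' {V : Type*} {G : SimpleGraph V} {u a b : V} {p : G.Walk u a}
    (hp : p.IsPath) (hab : G.Adj a b) (hb : b ∉ p.support) : (p.concat hab).IsPath := by
  rw [← SimpleGraph.Walk.isPath_reverse_iff, SimpleGraph.Walk.reverse_concat,
    SimpleGraph.Walk.cons_isPath_iff]
  refine ⟨hp.reverse, ?_⟩
  simpa using hb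

open SimpleGraph in
lemma tree_parity' {V : Type*} [DecidableEq V] {F : SimpleGraph V} (hF : F.IsTree) (r a b : V)
    (hab : F.Adj a b) {pa : F.Walk r a} {pb : F.Walk r b}
    (ha : pa.IsPath) (hb : pb.IsPath) :
    pa.length % 2 ≠ pb.length % 2 := by
  have key : pa.length = pb.length + 1 ∨ pb.length = pa.length + 1 := by
    by_cases hmem : b ∈ pa.support
    · left
      have htake : pa.takeUntil b hmem = pb :=
        (hF.existsUnique_path r b).unique (ha.takeUntil hmem) hb
      have hdrop : pa.dropUntil b hmem = Walk.cons hab.symm Walk.nil := by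
        refine (hF.existsUnique_path b a).unique (ha.dropUntil hmem) ?_
        simp [Walk.cons_isPath_iff, hab.ne']
      have := congr_arg Walk.length (pa.take_spec hmem)
      rw [Walk.length_append, htake, hdrop] at this
      simp at this
      omega
    · right
      have : pa.concat hab = pb :=
        (hF.existsUnique_path r b).unique (concat_isPath' ha hab hmem) hb
      have := congr_arg Walk.length this
      rw [Walk.length_concat] at this; omega
  omega


/-- The edge blow-up of a tree `F` by cliques of size `p+1` (with `p ≥ 3`) embeds into
the join of the matching `ℓP₂` with the complete `(p-1)`-partite graph with parts of
size `2ℓ`, where `ℓ` is the number of vertices of the blow-up. -/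
theorem stmt19 {V : Type*} [Fintype V] [DecidableEq V]
    (p : ℕ) (hp : 3 ≤ p) (F : SimpleGraph V) [DecidableRel F.Adj] (hF : F.IsTree)
    (ℓ : ℕ) (hℓ : ℓ = Fintype.card (V ⊕ (F.edgeSet × Fin (p - 1)))) :
    ∃ φ : edgeBlowup F (p - 1) →g
        graphJoin (matchingGraph ℓ)
          (SimpleGraph.completeMultipartiteGraph fun _ : Fin (p - 1) => Fin (2 * ℓ)),
      Function.Injective φ := by
  have hq2 : 2 ≤ p - 1 := by omega
  obtain ⟨r⟩ : Nonempty V := hF.isConnected.nonempty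
  set nV := Fintype.card V with hnV
  set nE := Fintype.card F.edgeSet with hnE
  have hcard : ℓ = nV + nE * (p - 1) := by
    rw [hℓ, Fintype.card_sum, Fintype.card_prod, Fintype.card_fin]
  have hEle : nE ≤ ℓ := by
    have : nE * 1 ≤ nE * (p - 1) := Nat.mul_le_mul_left nE (by omega)
    omega
  have hVle : nV ≤ 2 * ℓ := by omega
  have hE2 : nE ≤ 2 * ℓ := by omega
  let eV := Fintype.equivFin V
  let eE := Fintype.equivFin F.edgeSet
  let c : V → ℕ := fun a => ((hF.existsUnique_path r a).exists.choose).length % 2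
  have hc2 : ∀ a, c a < 2 := fun a => Nat.mod_lt _ (by norm_num)
  have hcne : ∀ a b, F.Adj a b → c a ≠ c b := fun a b hab =>
    tree_parity' hF r a b hab (hF.existsUnique_path r a).exists.choose_spec
      (hF.existsUnique_path r b).exists.choose_spec
  let φ : V ⊕ (F.edgeSet × Fin (p - 1)) →
      (Fin ℓ × Fin 2) ⊕ (Σ _ : Fin (p - 1), Fin (2 * ℓ)) := fun x =>
    match x with
    | Sum.inl a => Sum.inr ⟨⟨c a, lt_of_lt_of_le (hc2 a) hq2⟩,
        ⟨eV a, lt_of_lt_of_le (eV a).isLt hVle⟩⟩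
    | Sum.inr (e, k) =>
        if h : (k : ℕ) < 2 then
          Sum.inl (⟨eE e, lt_of_lt_of_le (eE e).isLt hEle⟩, ⟨k, h⟩)
        else Sum.inr ⟨k, ⟨eE e, lt_of_lt_of_le (eE e).isLt hE2⟩⟩
  have hmap : ∀ {x y}, (edgeBlowup F (p - 1)).Adj x y →
      (graphJoin (matchingGraph ℓ)
        (SimpleGraph.completeMultipartiteGraph fun _ : Fin (p - 1) => Fin (2 * ℓ))).Adj
        (φ x) (φ y) := by
    rintro (a | ⟨e, k⟩) (b | ⟨e', k'⟩) h
    · have hab : F.Adj a b := h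
      show (SimpleGraph.completeMultipartiteGraph _).Adj _ _
      simp only [SimpleGraph.comap_adj, SimpleGraph.top_adj]
      intro hc
      exact hcne a b hab (by simpa using congr_arg Fin.val hc)
    · dsimp only [φ]
      split
      · trivial
      · rename_i hk
        show (SimpleGraph.completeMultipartiteGraph _).Adj _ _
        simp only [SimpleGraph.comap_adj, SimpleGraph.top_adj]
        intro hc
        have := congr_arg Fin.val hc
        simp only [Fin.val_mk] at this
        have := hc2 a
        omega
    · dsimp only [φ]
      split
      · trivial
      · rename_i hk
        show (SimpleGraph.completeMultipartiteGraph _).Adj _ _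
        simp only [SimpleGraph.comap_adj, SimpleGraph.top_adj]
        intro hc
        have := congr_arg Fin.val hc
        simp only [Fin.val_mk] at this
        have := hc2 b
        omega
    · obtain ⟨he, hkk⟩ : e = e' ∧ k ≠ k' := h
      subst he
      dsimp only [φ]
      by_cases h1 : (k : ℕ) < 2 <;> by_cases h2 : (k' : ℕ) < 2
      · rw [dif_pos h1, dif_pos h2]
        show (matchingGraph ℓ).Adj _ _
        refine ⟨rfl, ?_⟩
        intro hc
        exact hkk (Fin.ext (by simpa using congr_arg Fin.val hc))
      · rw [dif_pos h1, dif_neg h2]; trivial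
      · rw [dif_neg h1, dif_pos h2]; trivial
      · rw [dif_neg h1, dif_neg h2]
        show (SimpleGraph.completeMultipartiteGraph _).Adj _ _
        simp only [SimpleGraph.comap_adj, SimpleGraph.top_adj]
        exact hkk
  have hinj : Function.Injective φ := by
    rintro (a | ⟨e, k⟩) (b | ⟨e', k'⟩) h <;> dsimp only [φ] at h
    · simp only [Sum.inr.injEq, Sigma.mk.inj_iff, heq_eq_eq, Fin.mk.injEq] at h
      exact congr_arg Sum.inl (eV.injective (Fin.ext h.2))
    · exfalso
      split at h
      · exact Sum.inr_ne_inl h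
      · simp only [Sum.inr.injEq, Sigma.mk.inj_iff] at h
        have := congr_arg Fin.val h.1
        simp only [Fin.val_mk] at this
        rename_i hk
        have := hc2 a
        omega
    · exfalso
      split at h
      · exact Sum.inl_ne_inr h
      · simp only [Sum.inr.injEq, Sigma.mk.inj_iff] at h
        have := congr_arg Fin.val h.1
        simp only [Fin.val_mk] at this
        rename_i hk
        have := hc2 b
        omega
    · by_cases h1 : (k : ℕ) < 2 <;> by_cases h2 : (k' : ℕ) < 2
      · rw [dif_pos h1, dif_pos h2] at h
        simp only [Sum.inl.injEq, Prod.mk.injEq, Fin.mk.injEq] at h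
        have he : e = e' := eE.injective (Fin.ext h.1)
        have hk : k = k' := Fin.ext h.2
        rw [he, hk]
      · rw [dif_pos h1, dif_neg h2] at h; exact (Sum.inl_ne_inr h).elim
      · rw [dif_neg h1, dif_pos h2] at h; exact (Sum.inr_ne_inl h).elim
      · rw [dif_neg h1, dif_neg h2] at h
        simp only [Sum.inr.injEq, Sigma.mk.inj_iff, heq_eq_eq, Fin.mk.injEq] at h
        have he : e = e' := eE.injective (Fin.ext h.2)
        have hk : k = k' := h.1
        rw [he, hk]
  exact ⟨⟨φ, hmap⟩, hinj⟩
end
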